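/- arXiv:2312.08326 — 2 statements merged into one kernel-verified Lean document; each statement's English description precedes it below -/
import Mathlib

section
/- If a persistence module V contains a nonzero right-closed point, i.e. there exist r ≥ 0 and a nonzero v ∈ V(r) with V(r ≤ r+ε)(v) = 0 for every ε > 0, then V is not locally compact. -/
open CategoryTheory CategoryTheory.Limits
open scoped NNReal ENNReal

noncomputable section

abbrev PersMod : Type 1 := ℝ≥0 ⥤ ModuleCat.{0} ℚ

abbrev pCh : Type 1 := CochainComplex PersMod ℕ

namespace Pers

open Classical in
/-- The pointwise carrier of the interval persistence module `𝕀_{[s,t)}`. -/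
def icar (s t : ℝ≥0∞) (u : ℝ≥0) : Submodule ℚ ℚ :=
  if s ≤ (u : ℝ≥0∞) ∧ (u : ℝ≥0∞) < t then ⊤ else ⊥

lemma icar_le_of_le {s t : ℝ≥0∞} {u v : ℝ≥0} (huv : u ≤ v) (hv : (v : ℝ≥0∞) < t) :
    icar s t u ≤ icar s t v := by
  classical
  unfold icar
  by_cases h1 : s ≤ (u : ℝ≥0∞) ∧ (u : ℝ≥0∞) < t
  · rw [if_pos h1, if_pos ⟨h1.1.trans (ENNReal.coe_le_coe.mpr huv), hv⟩]
  · rw [if_neg h1]; exact bot_le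

lemma icar_mono_birth {s s' : ℝ≥0∞} (h : s' ≤ s) (t : ℝ≥0∞) (u : ℝ≥0) :
    icar s t u ≤ icar s' t u := by
  classical
  unfold icar
  by_cases h1 : s ≤ (u : ℝ≥0∞) ∧ (u : ℝ≥0∞) < t
  · rw [if_pos h1, if_pos ⟨h.trans h1.1, h1.2⟩]
  · rw [if_neg h1]; exact bot_le

/-- The interval persistence module `𝕀_{[s,t)}`. -/
def intervalMod (s t : ℝ≥0∞) : PersMod where
  obj u := ModuleCat.of ℚ (icar s t u)
  map {u v} huv :=
    if hv : (v : ℝ≥0∞) < t then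
      ModuleCat.ofHom (Submodule.inclusion (icar_le_of_le (leOfHom huv) hv))
    else 0
  map_id u := by
    by_cases hu : (u : ℝ≥0∞) < t
    · rw [dif_pos hu]
      ext x
      rfl
    · rw [dif_neg hu]
      have hbot : icar s t u = ⊥ := if_neg (fun h => hu h.2)
      haveI h1 : Subsingleton (icar s t u) := by rw [hbot]; infer_instance
      haveI : Subsingleton ↑(ModuleCat.of ℚ ↥(icar s t u)) := h1
      exact (ModuleCat.isZero_of_subsingleton _).eq_of_src _ _
  map_comp {u v w} huv hvw := by
    by_cases hw : (w : ℝ≥0∞) < t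
    · have hv : (v : ℝ≥0∞) < t :=
        lt_of_le_of_lt (ENNReal.coe_le_coe.mpr (leOfHom hvw)) hw
      rw [dif_pos hw, dif_pos hw, dif_pos hv]
      ext x
      rfl
    · rw [dif_neg hw, dif_neg hw, Limits.comp_zero]

end Pers

namespace Pers

/-- The inclusion `𝕀_{[a,t)} ⟶ 𝕀_{[b,t)}` of interval modules, for `b ≤ a`. -/
def intervalModIncl (t : ℝ≥0∞) {a b : ℝ≥0∞} (h : b ≤ a) :
    intervalMod a t ⟶ intervalMod b t where
  app u := ModuleCat.ofHom (Submodule.inclusion (icar_mono_birth h t u))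
  naturality {u v} huv := by
    dsimp only [intervalMod]
    by_cases hv : (v : ℝ≥0∞) < t
    · rw [dif_pos hv, dif_pos hv]
      ext x
      rfl
    · rw [dif_neg hv, dif_neg hv, Limits.zero_comp, Limits.comp_zero]

open Classical in
/-- A totalized version of the inclusion of interval modules:
the inclusion when `b ≤ a`, and `0` otherwise. -/
def intervalModHom (t : ℝ≥0∞) (a b : ℝ≥0∞) : intervalMod a t ⟶ intervalMod b t :=
  if h : b ≤ a then intervalModIncl t h else 0

/-- Degree profile of a complex concentrated in degrees `m` (value `c`) and
`m+1` (value `d`); value `⊤` encodes the zero module. -/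
def phi (m : ℕ) (c d : ℝ≥0∞) : ℕ → ℝ≥0∞ :=
  fun n => if n = m then c else if n = m + 1 then d else ⊤

lemma phi_mono {m : ℕ} {c d c' d' : ℝ≥0∞} (hc : c' ≤ c) (hd : d' ≤ d) (n : ℕ) :
    phi m c' d' n ≤ phi m c d n := by
  unfold phi
  split_ifs <;> first | exact hc | exact hd | exact le_rfl

open Classical in
/-- The persistent cochain complex concentrated in degrees `m` and `m + 1`,
with values the 'step' interval modules `𝕀_{[c,∞)}` and `𝕀_{[d,∞)}`, and with
differential the natural inclusion (when `d ≤ c`). -/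
def twoStep (m : ℕ) (c d : ℝ≥0∞) : pCh where
  X n := intervalMod (phi m c d n) ⊤
  d i j :=
    if i = m ∧ j = m + 1 then intervalModHom ⊤ (phi m c d i) (phi m c d j) else 0
  shape i j hij := by
    rw [if_neg]
    rintro ⟨rfl, rfl⟩
    exact hij rfl
  d_comp_d' i j k hij hjk := by
    by_cases hi : i = m ∧ j = m + 1
    · rw [if_neg (by omega : ¬(j = m ∧ k = m + 1))]
      exact Limits.comp_zero
    · rw [if_neg hi]
      exact Limits.zero_comp

/-- The morphism of two-step complexes induced by inclusions. -/
def twoStepHom (m : ℕ) {c d c' d' : ℝ≥0∞} (hdc : d ≤ c) (hdc' : d' ≤ c')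
    (hc : c' ≤ c) (hd : d' ≤ d) : twoStep m c d ⟶ twoStep m c' d' where
  f n := intervalModIncl ⊤ (phi_mono hc hd n)
  comm' i j hij := by
    dsimp only [twoStep]
    by_cases hi : i = m ∧ j = m + 1
    · rw [if_pos hi, if_pos hi]
      obtain ⟨rfl, rfl⟩ := hi
      have h1 : phi i c d (i + 1) ≤ phi i c d i := by
        simp [phi, Nat.succ_ne_self]
        exact hdc
      have h1' : phi i c' d' (i + 1) ≤ phi i c' d' i := by
        simp [phi, Nat.succ_ne_self]
        exact hdc'
      rw [intervalModHom, dif_pos h1', intervalModHom, dif_pos h1]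
      ext u x
      rfl
    · rw [if_neg hi, if_neg hi, Limits.zero_comp, Limits.comp_zero]

end Pers

namespace Pers

open ZeroObject

/-- The interval sphere `𝕊^k_{[s,t)}` (with `t = ⊤` allowed). -/
def sphere (k : ℕ) (s : ℝ≥0) (t : ℝ≥0∞) : pCh :=
  match k with
  | 0 => (HomologicalComplex.single PersMod (ComplexShape.up ℕ) 0).obj
      (intervalMod (s : ℝ≥0∞) t)
  | m + 1 => twoStep m t (s : ℝ≥0∞)

/-- The persistent disk `𝔻^k_s` (with the convention `𝔻^0_s = 0`). -/
def disk (k : ℕ) (s : ℝ≥0) : pCh :=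
  match k with
  | 0 => 0
  | m + 1 => twoStep m (s : ℝ≥0∞) (s : ℝ≥0∞)

/-- The canonical inclusion `𝕊^k_{[s,t)} ⟶ 𝔻^k_s`. -/
def sphereToDisk (k : ℕ) (s : ℝ≥0) (t : ℝ≥0∞) (h : (s : ℝ≥0∞) ≤ t) :
    sphere k s t ⟶ disk k s :=
  match k with
  | 0 => 0
  | m + 1 => twoStepHom m h le_rfl h le_rfl

/-- The canonical inclusion `𝔻^k_t ⟶ 𝔻^k_s` for `s ≤ t`. -/
def diskToDisk (k : ℕ) (s t : ℝ≥0) (h : s ≤ t) : disk k t ⟶ disk k s :=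
  match k with
  | 0 => 0
  | m + 1 => twoStepHom m le_rfl le_rfl (ENNReal.coe_le_coe.mpr h) (ENNReal.coe_le_coe.mpr h)

/-- The set `I₀` of generating maps `𝕊^k_{[s,t)} ⟶ 𝔻^k_s`, `0 ≤ s < t < ∞`. -/
inductive I0mem : ∀ ⦃A B : pCh⦄, (A ⟶ B) → Prop
  | mk (k : ℕ) (s t : ℝ≥0) (h : s < t) :
      I0mem (sphereToDisk k s (t : ℝ≥0∞) (ENNReal.coe_le_coe.mpr h.le))

/-- The set `I∞` of generating maps `𝕊^k_{[s,∞)} ⟶ 𝔻^k_s`. -/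
inductive IinfMem : ∀ ⦃A B : pCh⦄, (A ⟶ B) → Prop
  | mk (k : ℕ) (s : ℝ≥0) : IinfMem (sphereToDisk k s ⊤ le_top)

/-- The set `I = I₀ ∪ I∞`. -/
def Imem : MorphismProperty pCh := fun _ _ f => I0mem f ∨ IinfMem f

/-- The set `J₀` of maps `𝔻^k_t ⟶ 𝔻^k_s`, `0 ≤ s < t < ∞`. -/
inductive J0mem : ∀ ⦃A B : pCh⦄, (A ⟶ B) → Prop
  | mk (k : ℕ) (s t : ℝ≥0) (h : s < t) : J0mem (diskToDisk k s t h.le)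

/-- The set `J∞` of maps `0 ⟶ 𝔻^k_s`. -/
inductive JinfMem : ∀ ⦃A B : pCh⦄, (A ⟶ B) → Prop
  | mk (k : ℕ) (s : ℝ≥0) : JinfMem (0 : (0 : pCh) ⟶ disk k s)

/-- The set `J = J₀ ∪ J∞`. -/
def Jmem : MorphismProperty pCh := fun _ _ f => J0mem f ∨ JinfMem f

/-- `Inj S`: the class of morphisms with the right lifting property with respect
to every morphism in `S`. -/
def Inj (S : MorphismProperty pCh) : MorphismProperty pCh :=
  fun _ _ f => ∀ ⦃A B : pCh⦄ (i : A ⟶ B), S i → HasLiftingProperty i f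

/-- `Cof S`: the class of morphisms with the left lifting property with respect
to every morphism in `Inj S`. -/
def Cof (S : MorphismProperty pCh) : MorphismProperty pCh :=
  fun _ _ i => ∀ ⦃X Y : pCh⦄ (f : X ⟶ Y), Inj S f → HasLiftingProperty i f

/-- Evaluation of a persistent cochain complex at a time `u`. -/
def evalAt (u : ℝ≥0) : pCh ⥤ CochainComplex (ModuleCat.{0} ℚ) ℕ :=
  ((evaluation ℝ≥0 (ModuleCat.{0} ℚ)).obj u).mapHomologicalComplex (ComplexShape.up ℕ)

/-- The class `W` of pointwise quasi-isomorphisms. -/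
def Wclass : MorphismProperty pCh :=
  fun _ _ f => ∀ u : ℝ≥0, QuasiIso ((evalAt u).map f)

end Pers

namespace Pers

/-- An object of a functor category indexed by `[0,∞)` is tame if there is a finite
set of reals such that structure maps not crossing any of them are isomorphisms. -/
def TameFunctor {C : Type*} [Category C] (F : ℝ≥0 ⥤ C) : Prop :=
  ∃ T : Finset ℝ≥0, ∀ (s u : ℝ≥0) (h : s ≤ u),
    (∀ r ∈ T, ¬(s < r ∧ r ≤ u)) → IsIso (F.map (homOfLE h))

/-- Tameness for a persistent cochain complex: all structure maps away from a finite
set of critical values are isomorphisms (in every degree). -/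
def TamePCh (X : pCh) : Prop :=
  ∃ T : Finset ℝ≥0, ∀ (s u : ℝ≥0) (h : s ≤ u),
    (∀ r ∈ T, ¬(s < r ∧ r ≤ u)) → ∀ k : ℕ, IsIso ((X.X k).map (homOfLE h))

/-- An object `X` of a category is compact if `Hom(X, -)` preserves filtered colimits. -/
def IsCompactObject {C : Type*} [Category C] (X : C) : Prop :=
  ∀ (J : Type) (_ : SmallCategory J) (_ : IsFiltered J),
    Nonempty (PreservesColimitsOfShape J (coyoneda.obj (Opposite.op X)))

/-- A persistence module is locally compact if every point lies in a compact subfunctor. -/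
def LocallyCompactMod (V : PersMod) : Prop :=
  ∀ (r : ℝ≥0) (v : V.obj r), ∃ (U : PersMod) (ι : U ⟶ V),
    Mono ι ∧ IsCompactObject U ∧ v ∈ Set.range (ι.app r)

/-- A persistent cochain complex is locally compact if every element lies in a compact
subobject. -/
def LocallyCompactPCh (X : pCh) : Prop :=
  ∀ (k : ℕ) (r : ℝ≥0) (x : (X.X k).obj r), ∃ (W : pCh) (ι : W ⟶ X),
    Mono ι ∧ IsCompactObject W ∧ x ∈ Set.range ((ι.f k).app r)

/-- A morphism is a retract of another morphism (in the arrow category). -/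
def IsRetractOfArrow {C : Type*} [Category C] {X Y X' Y' : C}
    (f : X ⟶ Y) (g : X' ⟶ Y') : Prop :=
  ∃ (i : Arrow.mk f ⟶ Arrow.mk g) (r : Arrow.mk g ⟶ Arrow.mk f), i ≫ r = 𝟙 (Arrow.mk f)

/-- The axioms of a model structure on `pCh`, given by classes of weak equivalences,
fibrations and cofibrations. -/
structure IsModelStructure (Weq Fib Cofib : MorphismProperty pCh) : Prop where
  /-- two-out-of-three: compositions -/
  weq_comp : ∀ {X Y Z : pCh} (f : X ⟶ Y) (g : Y ⟶ Z), Weq f → Weq g → Weq (f ≫ g)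
  /-- two-out-of-three: right cancellation -/
  weq_of_comp_left : ∀ {X Y Z : pCh} (f : X ⟶ Y) (g : Y ⟶ Z), Weq f → Weq (f ≫ g) → Weq g
  /-- two-out-of-three: left cancellation -/
  weq_of_comp_right : ∀ {X Y Z : pCh} (f : X ⟶ Y) (g : Y ⟶ Z), Weq g → Weq (f ≫ g) → Weq f
  /-- the classes are closed under retracts -/
  weq_retract : ∀ {X Y X' Y' : pCh} (f : X ⟶ Y) (g : X' ⟶ Y'),
    IsRetractOfArrow f g → Weq g → Weq f
  fib_retract : ∀ {X Y X' Y' : pCh} (f : X ⟶ Y) (g : X' ⟶ Y'),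
    IsRetractOfArrow f g → Fib g → Fib f
  cof_retract : ∀ {X Y X' Y' : pCh} (f : X ⟶ Y) (g : X' ⟶ Y'),
    IsRetractOfArrow f g → Cofib g → Cofib f
  /-- lifting of trivial cofibrations against fibrations -/
  lift_triv_cof : ∀ {A B X Y : pCh} (i : A ⟶ B) (p : X ⟶ Y),
    Cofib i → Weq i → Fib p → HasLiftingProperty i p
  /-- lifting of cofibrations against trivial fibrations -/
  lift_triv_fib : ∀ {A B X Y : pCh} (i : A ⟶ B) (p : X ⟶ Y),
    Cofib i → Fib p → Weq p → HasLiftingProperty i p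
  /-- factorization as a trivial cofibration followed by a fibration -/
  fact₁ : ∀ {X Y : pCh} (f : X ⟶ Y), ∃ (Z : pCh) (i : X ⟶ Z) (p : Z ⟶ Y),
    Cofib i ∧ Weq i ∧ Fib p ∧ i ≫ p = f
  /-- factorization as a cofibration followed by a trivial fibration -/
  fact₂ : ∀ {X Y : pCh} (f : X ⟶ Y), ∃ (Z : pCh) (i : X ⟶ Z) (p : Z ⟶ Y),
    Cofib i ∧ Fib p ∧ Weq p ∧ i ≫ p = f

end Pers

namespace Pers

/-- A morphism is a pushout of a coproduct of morphisms in `S`. -/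
def IsPushoutOfCoproductsOf (S : MorphismProperty pCh) : MorphismProperty pCh :=
  fun A B g => ∃ (Γ : Type) (Xs Ys : Γ → pCh) (ι : ∀ γ, Xs γ ⟶ Ys γ),
    (∀ γ, S (ι γ)) ∧ ∃ (a : (∐ Xs) ⟶ A) (b : (∐ Ys) ⟶ B),
      IsPushout (Limits.Sigma.map fun γ => ι γ) a b g

/-- The inclusion functor of the initial segment `Set.Iio b` of a preorder. -/
def iioFunctor {β : Type} [Preorder β] (b : β) : Set.Iio b ⥤ β :=
  Monotone.functor (f := (Subtype.val : Set.Iio b → β)) (fun _ _ h => h)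

/-- The cocone over the restriction of `F` to `Set.Iio b` with apex `F.obj b`. -/
def iioCocone {β : Type} [Preorder β] (F : β ⥤ pCh) (b : β) :
    Cocone (iioFunctor b ⋙ F) where
  pt := F.obj b
  ι :=
    { app := fun x => F.map (homOfLE x.2.le)
      naturality := by
        intro x y g
        dsimp [iioFunctor, Monotone.functor]
        rw [Category.comp_id, ← F.map_comp]
        exact congrArg F.map (Subsingleton.elim _ _) }

/-- A witness that `f : X ⟶ Y` is a transfinite composition of morphisms in `S`:
a well-ordered continuous chain starting at `X`, with colimit `Y`, all whose
successor maps lie in `S`. -/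
structure TransfiniteCompositionWitness (S : MorphismProperty pCh)
    {X Y : pCh} (f : X ⟶ Y) where
  /-- the (well-ordered) indexing type -/
  β : Type
  [lo : LinearOrder β]
  [bot : OrderBot β]
  [succ : SuccOrder β]
  [wf : WellFoundedLT β]
  /-- the chain -/
  F : β ⥤ pCh
  /-- the chain starts at `X` -/
  iso : F.obj ⊥ ≅ X
  /-- the maps to the colimit `Y` -/
  incl : F ⟶ (Functor.const β).obj Y
  /-- `Y` is the colimit of the chain -/
  isColimit : IsColimit (Cocone.mk Y incl)
  /-- each successor map belongs to `S` -/
  succ_mem : ∀ b : β, ¬ IsMax b → S (F.map (homOfLE (Order.le_succ b)))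
  /-- the chain is continuous at every limit element -/
  limit_continuous : ∀ b : β, Order.IsSuccLimit b →
    Nonempty (IsColimit (iioCocone F b))
  /-- the composite of the whole chain is `f` -/
  fac : iso.inv ≫ incl.app ⊥ = f

/-- `f` is a transfinite composition of morphisms in `S`. -/
def IsTransfiniteCompositionOf (S : MorphismProperty pCh) {X Y : pCh}
    (f : X ⟶ Y) : Prop :=
  Nonempty (TransfiniteCompositionWitness S f)

open ZeroObject in
/-- An `I`-cell complex: an object `X` such that `0 ⟶ X` is a transfinite composition
of pushouts of coproducts of maps in `I`. -/
def IsICellComplex (X : pCh) : Prop :=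
  IsTransfiniteCompositionOf (IsPushoutOfCoproductsOf Imem) (0 : (0 : pCh) ⟶ X)

end Pers

/-- The category of copersistent simplicial sets. -/
abbrev CoPersSSet : Type 1 := ℝ≥0ᵒᵖ ⥤ SSet.{0}

namespace Pers

/-- Tameness for a copersistent simplicial set. -/
def TameCo (F : CoPersSSet) : Prop :=
  ∃ T : Finset ℝ≥0, ∀ (s u : ℝ≥0) (h : s ≤ u),
    (∀ r ∈ T, ¬(s < r ∧ r ≤ u)) → IsIso (F.map (homOfLE h).op)

/-- A simplex of a simplicial set is degenerate if it is in the image of a simplex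
of strictly smaller dimension. -/
def IsDegenerate (K : SSet) {n : ℕ}
    (x : K.obj (Opposite.op (SimplexCategory.mk n))) : Prop :=
  ∃ (m : ℕ) (_ : m < n) (g : SimplexCategory.mk n ⟶ SimplexCategory.mk m)
    (y : K.obj (Opposite.op (SimplexCategory.mk m))), K.map g.op y = x

/-- A simplicial set is finite if it has finitely many nondegenerate simplices. -/
def FiniteSSet (K : SSet) : Prop :=
  Finite (Σ n : ℕ, {x : K.obj (Opposite.op (SimplexCategory.mk n)) // ¬ IsDegenerate K x})

end Pers

namespace Pers

open Classical

/-! ### Auxiliary constructions for Statement 12 -/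

lemma stmt12.hom_eq_of_tgt_subsingleton {M N : ModuleCat.{0} ℚ} (h : Subsingleton N)
    (f g : M ⟶ N) : f = g := by
  haveI := h
  exact (ModuleCat.isZero_of_subsingleton N).eq_of_tgt f g

lemma stmt12.hom_eq_of_src_subsingleton {M N : ModuleCat.{0} ℚ} (h : Subsingleton M)
    (f g : M ⟶ N) : f = g := by
  haveI := h
  exact (ModuleCat.isZero_of_subsingleton M).eq_of_src f g

lemma stmt12.subsingleton_of_eq_bot {p : Submodule ℚ ℚ} (h : p = ⊥) :
    Subsingleton (ModuleCat.of ℚ ↥p) := by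
  rw [h]; infer_instance

lemma icar_zero_eq_top {t : ℝ≥0∞} {u : ℝ≥0} (h : (u : ℝ≥0∞) < t) : icar 0 t u = ⊤ :=
  if_pos ⟨zero_le, h⟩

lemma icar_zero_eq_bot {t : ℝ≥0∞} {u : ℝ≥0} (h : ¬ (u : ℝ≥0∞) < t) : icar 0 t u = ⊥ :=
  if_neg (fun hh => h hh.2)

/-- The quotient map `𝕀_{[0,t)} ⟶ 𝕀_{[0,t')}` for `t' ≤ t`. -/
def quotHom {t t' : ℝ≥0∞} (h : t' ≤ t) : intervalMod 0 t ⟶ intervalMod 0 t' where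
  app u :=
    (if hu : (u : ℝ≥0∞) < t' then
      ModuleCat.ofHom (Submodule.inclusion
        (by rw [icar_zero_eq_top hu]; exact le_top))
    else 0 : ModuleCat.of ℚ (icar 0 t u) ⟶ ModuleCat.of ℚ (icar 0 t' u))
  naturality {u v} huv := by
    dsimp only [intervalMod]
    by_cases hv : (v : ℝ≥0∞) < t'
    · have hvt : (v : ℝ≥0∞) < t := lt_of_lt_of_le hv h
      have hu : (u : ℝ≥0∞) < t' :=
        lt_of_le_of_lt (ENNReal.coe_le_coe.mpr (leOfHom huv)) hv
      rw [dif_pos hv, dif_pos hvt, dif_pos hv, dif_pos hu]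
      ext x
      rfl
    · exact stmt12.hom_eq_of_tgt_subsingleton
        (stmt12.subsingleton_of_eq_bot (icar_zero_eq_bot hv)) _ _

lemma quotHom_id (t : ℝ≥0∞) : quotHom (le_refl t) = 𝟙 (intervalMod 0 t) := by
  apply NatTrans.ext
  funext u
  dsimp only [quotHom, NatTrans.id_app]
  by_cases hu : (u : ℝ≥0∞) < t
  · rw [dif_pos hu]
    ext x
    rfl
  · exact stmt12.hom_eq_of_tgt_subsingleton
      (stmt12.subsingleton_of_eq_bot (icar_zero_eq_bot hu)) _ _

lemma quotHom_comp {t t' t'' : ℝ≥0∞} (h1 : t' ≤ t) (h2 : t'' ≤ t') :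
    quotHom h1 ≫ quotHom h2 = quotHom (h2.trans h1) := by
  apply NatTrans.ext
  funext u
  dsimp only [quotHom, NatTrans.comp_app]
  by_cases hu : (u : ℝ≥0∞) < t''
  · have hu' : (u : ℝ≥0∞) < t' := lt_of_lt_of_le hu h2
    rw [dif_pos hu, dif_pos hu', dif_pos hu]
    ext x
    rfl
  · exact stmt12.hom_eq_of_tgt_subsingleton
      (stmt12.subsingleton_of_eq_bot (icar_zero_eq_bot hu)) _ _

/-- Index category: times `> r`, ordered by reverse inclusion. -/
abbrev Jcat (r : ℝ≥0) : Type := (↥(Set.Ioi r))ᵒᵈ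

/-- underlying value of an index -/
def vl {r : ℝ≥0} (t : Jcat r) : ℝ≥0 := (OrderDual.ofDual t).1

lemma vl_gt {r : ℝ≥0} (t : Jcat r) : r < vl t := (OrderDual.ofDual t).2

lemma vl_antitone {r : ℝ≥0} {t t' : Jcat r} (h : t ⟶ t') : vl t' ≤ vl t := leOfHom h

instance (r : ℝ≥0) : Nonempty (Jcat r) :=
  ⟨OrderDual.toDual ⟨r + 1, by simp [Set.mem_Ioi]⟩⟩

/-- The diagram `t ↦ 𝕀_{[0,t)}`, `t ↓ r`. -/
def DD (r : ℝ≥0) : Jcat r ⥤ PersMod where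
  obj t := intervalMod 0 ((vl t : ℝ≥0) : ℝ≥0∞)
  map {t t'} h := quotHom (ENNReal.coe_le_coe.mpr (vl_antitone h))
  map_id t := quotHom_id _
  map_comp {t t' t''} f g :=
    (quotHom_comp (ENNReal.coe_le_coe.mpr (vl_antitone f))
      (ENNReal.coe_le_coe.mpr (vl_antitone g))).symm

/-- carrier of the closed interval module `𝕀_{[0,r]}` -/
def ccar (r : ℝ≥0) (u : ℝ≥0) : Submodule ℚ ℚ := if u ≤ r then ⊤ else ⊥

lemma ccar_eq_top {r u : ℝ≥0} (h : u ≤ r) : ccar r u = ⊤ := if_pos h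

lemma ccar_eq_bot {r u : ℝ≥0} (h : ¬ u ≤ r) : ccar r u = ⊥ := if_neg h

/-- The closed interval module `𝕀_{[0,r]}`. -/
def clMod (r : ℝ≥0) : PersMod where
  obj u := ModuleCat.of ℚ (ccar r u)
  map {u v} huv :=
    (if hv : v ≤ r then
      ModuleCat.ofHom (Submodule.inclusion (by rw [ccar_eq_top hv]; exact le_top))
    else 0 : ModuleCat.of ℚ (ccar r u) ⟶ ModuleCat.of ℚ (ccar r v))
  map_id u := by
    by_cases hu : u ≤ r
    · rw [dif_pos hu]
      ext x
      rfl
    · exact stmt12.hom_eq_of_tgt_subsingleton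
        (stmt12.subsingleton_of_eq_bot (ccar_eq_bot hu)) _ _
  map_comp {u v w} huv hvw := by
    by_cases hw : w ≤ r
    · have hv : v ≤ r := (leOfHom hvw).trans hw
      rw [dif_pos hw, dif_pos hw, dif_pos hv]
      ext x
      rfl
    · exact stmt12.hom_eq_of_tgt_subsingleton
        (stmt12.subsingleton_of_eq_bot (ccar_eq_bot hw)) _ _

/-- The projection `𝕀_{[0,t)} ⟶ 𝕀_{[0,r]}` for `r < t`. -/
def toCl {r : ℝ≥0} {t : ℝ≥0∞} (ht : (r : ℝ≥0∞) < t) : intervalMod 0 t ⟶ clMod r where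
  app u :=
    (if hu : u ≤ r then
      ModuleCat.ofHom (Submodule.inclusion (by rw [ccar_eq_top hu]; exact le_top))
    else 0 : ModuleCat.of ℚ (icar 0 t u) ⟶ ModuleCat.of ℚ (ccar r u))
  naturality {u v} huv := by
    dsimp only [intervalMod, clMod]
    by_cases hv : v ≤ r
    · have hu : u ≤ r := (leOfHom huv).trans hv
      have hvt : (v : ℝ≥0∞) < t :=
        lt_of_le_of_lt (ENNReal.coe_le_coe.mpr hv) ht
      rw [dif_pos hv, dif_pos hvt, dif_pos hv, dif_pos hu]
      ext x
      rfl
    · exact stmt12.hom_eq_of_tgt_subsingleton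
        (stmt12.subsingleton_of_eq_bot (ccar_eq_bot hv)) _ _

lemma quot_toCl {r : ℝ≥0} {t t' : ℝ≥0∞} (h : t' ≤ t) (ht : (r : ℝ≥0∞) < t)
    (ht' : (r : ℝ≥0∞) < t') : quotHom h ≫ toCl ht' = toCl ht := by
  apply NatTrans.ext
  funext u
  dsimp only [quotHom, toCl, NatTrans.comp_app]
  by_cases hu : u ≤ r
  · have hu' : (u : ℝ≥0∞) < t' :=
      lt_of_le_of_lt (ENNReal.coe_le_coe.mpr hu) ht'
    rw [dif_pos hu, dif_pos hu', dif_pos hu]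
    ext x
    rfl
  · exact stmt12.hom_eq_of_tgt_subsingleton
      (stmt12.subsingleton_of_eq_bot (ccar_eq_bot hu)) _ _

lemma vl_coe_lt {r : ℝ≥0} (t : Jcat r) : ((r : ℝ≥0) : ℝ≥0∞) < ((vl t : ℝ≥0) : ℝ≥0∞) :=
  ENNReal.coe_lt_coe.mpr (vl_gt t)

/-- The colimit cocone for `DD r` with apex `𝕀_{[0,r]}`. -/
def ccone (r : ℝ≥0) : Cocone (DD r) where
  pt := clMod r
  ι :=
    { app := fun t => toCl (vl_coe_lt t)
      naturality := fun t t' h => by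
        rw [Functor.const_obj_map]
        exact (quot_toCl (ENNReal.coe_le_coe.mpr (vl_antitone h)) (vl_coe_lt t)
          (vl_coe_lt t')).trans (Category.comp_id _).symm }

lemma cocone_app_vanish {r : ℝ≥0} (s : Cocone (DD r)) (t : Jcat r) (v : ℝ≥0)
    (hv : r < v) : (s.ι.app t).app v = 0 := by
  set t' : Jcat r := OrderDual.toDual ⟨min (vl t) v, lt_min (vl_gt t) hv⟩ with ht'
  have harr : t ⟶ t' := homOfLE (min_le_left (vl t) v : vl t' ≤ vl t)
  have hfac : s.ι.app t = (DD r).map harr ≫ s.ι.app t' := (s.w harr).symm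
  have hz : ((DD r).map harr).app v = 0 := by
    dsimp only [DD, quotHom]
    rw [dif_neg]; rfl
    exact not_lt.mpr (ENNReal.coe_le_coe.mpr (min_le_right (vl t) v))
  rw [hfac, NatTrans.comp_app, hz, Limits.zero_comp]

/-- base index `r + 1` -/
def t0 (r : ℝ≥0) : Jcat r := OrderDual.toDual ⟨r + 1, by simp [Set.mem_Ioi]⟩

/-- The descent morphism out of the cocone apex. -/
def descHom (r : ℝ≥0) (s : Cocone (DD r)) : clMod r ⟶ s.pt where
  app u :=
    (if hu : u ≤ r then
      ModuleCat.ofHom (Submodule.inclusion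
        (show ccar r u ≤ icar 0 ((vl (t0 r) : ℝ≥0) : ℝ≥0∞) u by
          rw [icar_zero_eq_top (lt_of_le_of_lt (ENNReal.coe_le_coe.mpr hu) (vl_coe_lt (t0 r)))]
          exact le_top)) ≫ (s.ι.app (t0 r)).app u
    else 0 : ModuleCat.of ℚ (ccar r u) ⟶ s.pt.obj u)
  naturality {u v} huv := by
    by_cases hv : v ≤ r
    · have hu : u ≤ r := (leOfHom huv).trans hv
      have hvt : (v : ℝ≥0∞) < ((vl (t0 r) : ℝ≥0) : ℝ≥0∞) :=
        lt_of_le_of_lt (ENNReal.coe_le_coe.mpr hv) (vl_coe_lt (t0 r))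
      have hnat := (s.ι.app (t0 r)).naturality huv
      dsimp only [Functor.const_obj_obj] at hnat
      dsimp only [clMod]
      erw [dif_pos hv, dif_pos hv, dif_pos hu, Category.assoc, ← hnat]
      dsimp only [DD, intervalMod]
      rw [dif_pos hvt]
      ext x
      rfl
    · have hnat := (s.ι.app (t0 r)).naturality huv
      dsimp only [Functor.const_obj_obj] at hnat
      have hvan : (s.ι.app (t0 r)).app v = 0 :=
        cocone_app_vanish s (t0 r) v (not_le.mp hv)
      dsimp only [clMod]
      erw [dif_neg hv, dif_neg hv, Limits.zero_comp]
      by_cases hu : u ≤ r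
      · erw [dif_pos hu, Category.assoc, ← hnat, hvan, Limits.comp_zero]
      · rw [dif_neg hu, Limits.zero_comp]

/-- `ccone r` is a colimit cocone. -/
def cconeIsColimit (r : ℝ≥0) : IsColimit (ccone r) where
  desc s := descHom r s
  fac s t := by
    apply NatTrans.ext
    funext u
    by_cases hu : u ≤ r
    · set t'' : Jcat r := OrderDual.toDual
        ⟨min (vl t) (vl (t0 r)), lt_min (vl_gt t) (vl_gt (t0 r))⟩ with ht''
      have ha : t ⟶ t'' := homOfLE (min_le_left _ _ : vl t'' ≤ vl t)
      have hb : t0 r ⟶ t'' := homOfLE (min_le_right _ _ : vl t'' ≤ vl (t0 r))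
      have hfa : s.ι.app t = (DD r).map ha ≫ s.ι.app t'' := (s.w ha).symm
      have hfb : s.ι.app (t0 r) = (DD r).map hb ≫ s.ι.app t'' := (s.w hb).symm
      have hu'' : (u : ℝ≥0∞) < ((vl t'' : ℝ≥0) : ℝ≥0∞) :=
        lt_of_le_of_lt (ENNReal.coe_le_coe.mpr hu) (vl_coe_lt t'')
      erw [NatTrans.comp_app]
      dsimp only [ccone, descHom, toCl]
      rw [dif_pos hu, dif_pos hu, hfa, hfb, NatTrans.comp_app, NatTrans.comp_app]
      dsimp only [DD, quotHom]
      rw [dif_pos hu'', dif_pos hu'']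
      ext x
      rfl
    · erw [NatTrans.comp_app]
      dsimp only [ccone, descHom]
      erw [dif_neg hu, Limits.comp_zero,
        cocone_app_vanish s t u (not_le.mp hu)]
  uniq s m hm := by
    apply NatTrans.ext
    funext u
    by_cases hu : u ≤ r
    · ext x
      have hxmem : ((show ↥(ccar r u) from x) : ℚ) ∈
          icar 0 ((vl (t0 r) : ℝ≥0) : ℝ≥0∞) u := by
        rw [icar_zero_eq_top (lt_of_le_of_lt (ENNReal.coe_le_coe.mpr hu) (vl_coe_lt (t0 r)))]
        trivial
      set y : ↥(icar 0 ((vl (t0 r) : ℝ≥0) : ℝ≥0∞) u) := ⟨_, hxmem⟩ with hy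
      have hxy : ((ccone r).ι.app (t0 r)).app u y = x := by
        dsimp only [ccone, toCl]
        rw [dif_pos hu]
        rfl
      have h1 := congrArg (fun (f : (DD r).obj (t0 r) ⟶ s.pt) => f.app u y) (hm (t0 r))
      dsimp only at h1
      rw [NatTrans.comp_app] at h1
      have h1' : m.app u (((ccone r).ι.app (t0 r)).app u y) = (s.ι.app (t0 r)).app u y := h1
      rw [hxy] at h1'
      rw [h1']
      dsimp only [descHom]
      rw [dif_pos hu]
      rfl
    · exact stmt12.hom_eq_of_src_subsingleton
        (stmt12.subsingleton_of_eq_bot (ccar_eq_bot hu)) _ _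

end Pers

namespace Pers

open Classical

/-- The canonical map `U ⟶ 𝕀_{[0,r]}` induced by a functional on `U(r)`. -/
def lambdaNT (U : PersMod) (r : ℝ≥0) (f : U.obj r →ₗ[ℚ] ℚ) : U ⟶ clMod r where
  app s :=
    (if hs : s ≤ r then
      ModuleCat.ofHom (LinearMap.codRestrict (ccar r s)
        (f.comp (U.map (homOfLE hs)).hom)
        (fun x => by rw [ccar_eq_top hs]; trivial))
    else 0 : ModuleCat.of ℚ (U.obj s) ⟶ ModuleCat.of ℚ (ccar r s))
  naturality {s s'} h := by
    by_cases hs' : s' ≤ r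
    · have hs : s ≤ r := (leOfHom h).trans hs'
      dsimp only [clMod]
      rw [dif_pos hs', dif_pos hs, dif_pos hs']
      ext x
      show f (U.map (homOfLE hs') (U.map h x)) = f (U.map (homOfLE hs) x)
      congr 1
      have heq : U.map h ≫ U.map (homOfLE hs') = U.map (homOfLE hs) := by
        rw [← U.map_comp]
        exact congrArg U.map (Subsingleton.elim _ _)
      exact congrArg (fun (m : U.obj s ⟶ U.obj r) => m x) heq
    · exact stmt12.hom_eq_of_tgt_subsingleton
        (stmt12.subsingleton_of_eq_bot (ccar_eq_bot hs')) _ _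

lemma lambdaNT_apply_val (U : PersMod) (r : ℝ≥0) (f : U.obj r →ₗ[ℚ] ℚ)
    {s : ℝ≥0} (hs : s ≤ r) (x : U.obj s) :
    (lambdaNT U r f).app s x =
      ⟨f (U.map (homOfLE hs) x), by rw [ccar_eq_top hs]; trivial⟩ := by
  dsimp only [lambdaNT]
  rw [dif_pos hs]
  rfl

/-- If `U` contains a nonzero right-closed point then it is not a compact object. -/
theorem not_compact_of_rightClosed_point (U : PersMod) (r : ℝ≥0) (u : U.obj r)
    (hu : u ≠ 0)
    (hrc : ∀ (s : ℝ≥0) (h : r ≤ s), r < s → U.map (homOfLE h) u = 0) :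
    ¬ IsCompactObject U := by
  intro hc
  obtain ⟨P⟩ := hc (Jcat r) inferInstance inferInstance
  haveI := P
  have hmap : IsColimit ((coyoneda.obj (Opposite.op U)).mapCocone (ccone r)) :=
    isColimitOfPreserves _ (cconeIsColimit r)
  obtain ⟨f, hf⟩ : ∃ f : U.obj r →ₗ[ℚ] ℚ, f u ≠ 0 := by
    by_contra h
    push_neg at h
    exact hu ((Module.forall_dual_apply_eq_zero_iff ℚ u).mp h)
  obtain ⟨t, g, hg⟩ := Types.jointly_surjective _ hmap (lambdaNT U r f)
  have hg' : g ≫ (ccone r).ι.app t = lambdaNT U r f := hg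
  obtain ⟨w, hw1, hw2⟩ := exists_between (vl_gt t)
  have hnat := g.naturality (homOfLE hw1.le)
  have h2 : g.app w (U.map (homOfLE hw1.le) u)
      = ((DD r).obj t).map (homOfLE hw1.le) (g.app r u) :=
    congrArg (fun (m : U.obj r ⟶ ((DD r).obj t).obj w) => m u) hnat
  have h4 : ((DD r).obj t).map (homOfLE hw1.le) (g.app r u) = 0 := by
    rw [← h2, hrc w hw1.le hw1, map_zero]
  have h5 : g.app r u = 0 := by
    have hle : icar 0 ((vl t : ℝ≥0) : ℝ≥0∞) r ≤ icar 0 ((vl t : ℝ≥0) : ℝ≥0∞) w :=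
      icar_le_of_le hw1.le (ENNReal.coe_lt_coe.mpr hw2)
    have h6 : (intervalMod 0 ((vl t : ℝ≥0) : ℝ≥0∞)).map (homOfLE hw1.le)
        = ModuleCat.ofHom (Submodule.inclusion hle) := by
      dsimp only [intervalMod]
      rw [dif_pos (ENNReal.coe_lt_coe.mpr hw2)]
    rw [show ((DD r).obj t).map (homOfLE hw1.le)
        = (intervalMod 0 ((vl t : ℝ≥0) : ℝ≥0∞)).map (homOfLE hw1.le) from rfl, h6] at h4
    have h9 : Submodule.inclusion hle (g.app r u) = Submodule.inclusion hle 0 := by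
      rw [map_zero]
      exact h4
    exact Submodule.inclusion_injective hle h9
  have h7 : (lambdaNT U r f).app r u = ((ccone r).ι.app t).app r (g.app r u) := by
    rw [← hg']
    rfl
  rw [h5, map_zero, lambdaNT_apply_val U r f (le_refl r) u] at h7
  have h8 := congrArg Subtype.val h7
  dsimp only at h8
  apply hf
  simpa using h8.trans (rfl : _ = (0 : ℚ))

end Pers

namespace Pers

/-- If a persistence module `V` contains a nonzero right-closed
point, i.e. a nonzero `v ∈ V(r)` killed by every structure map `V(r ≤ r + ε)` with
`ε > 0`, then `V` is not locally compact. -/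
theorem not_locallyCompact_of_rightClosed (V : PersMod) (r : ℝ≥0) (v : V.obj r)
    (hv : v ≠ 0)
    (hrc : ∀ ε : ℝ≥0, 0 < ε → V.map (homOfLE (le_self_add : r ≤ r + ε)) v = 0) :
    ¬ LocallyCompactMod V := by
  intro hLC
  obtain ⟨U, ι, hmono, hcomp, u, hu⟩ := hLC r v
  haveI := hmono
  have hinj : ∀ s : ℝ≥0, Function.Injective (ι.app s) := fun s =>
    (ModuleCat.mono_iff_injective (ι.app s)).mp inferInstance
  have hu0 : u ≠ 0 := by
    intro h
    apply hv
    rw [← hu, h, map_zero]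
  refine not_compact_of_rightClosed_point U r u hu0 ?_ hcomp
  intro s h hrs
  apply hinj s
  rw [map_zero]
  have hnat := ι.naturality (homOfLE h)
  have h1 : ι.app s (U.map (homOfLE h) u) = V.map (homOfLE h) (ι.app r u) :=
    congrArg (fun (m : U.obj r ⟶ V.obj s) => m u) hnat
  rw [h1, hu]
  have hε := hrc (s - r) (tsub_pos_of_lt hrs)
  have hsr : r + (s - r) = s := add_tsub_cancel_of_le h
  rw [Subsingleton.elim (homOfLE h)
    (homOfLE (le_self_add : r ≤ r + (s - r)) ≫ eqToHom hsr), V.map_comp]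
  have hrfl : (V.map (homOfLE (le_self_add : r ≤ r + (s - r))) ≫ V.map (eqToHom hsr)) v
      = V.map (eqToHom hsr) (V.map (homOfLE (le_self_add : r ≤ r + (s - r))) v) := rfl
  rw [hrfl, hε, map_zero]

end Pers
end
end

section
/- Every tame object X of pCh is cofibrant in the interval-sphere model structure: the unique map 0 → X belongs to Cof(I). -/
open CategoryTheory CategoryTheory.Limits
open scoped NNReal ENNReal

noncomputable section

namespace Pers

/-! ### Auxiliary machinery for the proof of `cofibrant_of_tame` -/

section Aux

lemma mcomp_apply {M N P : ModuleCat.{0} ℚ} (f : M ⟶ N) (g : N ⟶ P) (x : M) :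
    (f ≫ g) x = g (f x) := rfl

lemma pmap_map (V : PersMod) {u v w : ℝ≥0} (h : u ≤ v) (h2 : v ≤ w) (x : V.obj u) :
    V.map (homOfLE h2) (V.map (homOfLE h) x) = V.map (homOfLE (h.trans h2)) x := by
  rw [show V.map (homOfLE h2) (V.map (homOfLE h) x)
      = (V.map (homOfLE h) ≫ V.map (homOfLE h2)) x from rfl,
    ← Functor.map_comp, homOfLE_comp]

lemma pmap_id (V : PersMod) {u : ℝ≥0} (h : u ≤ u) (x : V.obj u) :
    V.map (homOfLE h) x = x := by
  rw [show homOfLE h = 𝟙 u from rfl, V.map_id]; rfl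

lemma nat_app {V W : PersMod} (φ : V ⟶ W) {u v : ℝ≥0} (h : u ≤ v) (x : V.obj u) :
    φ.app v (V.map (homOfLE h) x) = W.map (homOfLE h) (φ.app u x) := by
  rw [show φ.app v (V.map (homOfLE h) x) = (V.map (homOfLE h) ≫ φ.app v) x from rfl,
    φ.naturality, mcomp_apply]

lemma icar_eq_top {a : ℝ≥0∞} {u : ℝ≥0} (h : a ≤ (u : ℝ≥0∞)) : icar a ⊤ u = ⊤ :=
  if_pos ⟨h, ENNReal.coe_lt_top⟩

lemma icar_eq_bot {a : ℝ≥0∞} {u : ℝ≥0} (h : ¬ a ≤ (u : ℝ≥0∞)) : icar a ⊤ u = ⊥ :=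
  if_neg (fun hh => h hh.1)

/-- The canonical generator of an interval module, at any point of the interval. -/
def genE (a : ℝ≥0∞) (u : ℝ≥0) (h : a ≤ (u : ℝ≥0∞)) : (intervalMod a ⊤).obj u :=
  ⟨1, by rw [icar_eq_top h]; trivial⟩

lemma elem_eq_smul_genE {a : ℝ≥0∞} {u : ℝ≥0} (h : a ≤ (u : ℝ≥0∞))
    (x : (intervalMod a ⊤).obj u) : x = x.1 • genE a u h := by
  apply Subtype.ext
  show x.1 = x.1 • (1 : ℚ)
  rw [smul_eq_mul, mul_one]

lemma elem_eq_zero {a : ℝ≥0∞} {u : ℝ≥0} (h : ¬ a ≤ (u : ℝ≥0∞))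
    (x : (intervalMod a ⊤).obj u) : x = 0 := by
  apply Subtype.ext
  have hle : icar a ⊤ u ≤ ⊥ := le_of_eq (icar_eq_bot h)
  exact (Submodule.mem_bot ℚ).1 (hle x.2)

lemma intervalMod_map_genE {a : ℝ≥0∞} {u v : ℝ≥0} (huv : u ≤ v) (h : a ≤ (u : ℝ≥0∞))
    (h' : a ≤ (v : ℝ≥0∞)) :
    (intervalMod a ⊤).map (homOfLE huv) (genE a u h) = genE a v h' := by
  show (if hv : (v : ℝ≥0∞) < ⊤ then
      ModuleCat.ofHom (Submodule.inclusion (icar_le_of_le huv hv)) else 0) (genE a u h) = _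
  rw [dif_pos ENNReal.coe_lt_top]
  exact Subtype.ext rfl

lemma intervalMod_map_coe {a : ℝ≥0∞} {u v : ℝ≥0} (huv : u ≤ v)
    (x : (intervalMod a ⊤).obj u) :
    ((intervalMod a ⊤).map (homOfLE huv) x).1 = x.1 := by
  show ((if hv : (v : ℝ≥0∞) < ⊤ then
      ModuleCat.ofHom (Submodule.inclusion (icar_le_of_le huv hv)) else 0) x).1 = x.1
  rw [dif_pos ENNReal.coe_lt_top]
  rfl

/-- Construct a map out of an interval module from a compatible family of values. -/
def fromIntervalE (a : ℝ≥0∞) (V : PersMod)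
    (v : ∀ u : ℝ≥0, a ≤ (u : ℝ≥0∞) → V.obj u)
    (hv : ∀ (u u' : ℝ≥0) (huu' : u ≤ u') (hu : a ≤ (u : ℝ≥0∞)),
      V.map (homOfLE huu') (v u hu) = v u' (hu.trans (by exact_mod_cast huu'))) :
    intervalMod a ⊤ ⟶ V where
  app u := ModuleCat.ofHom
    { toFun := fun x => x.1 • (if hu : a ≤ (u : ℝ≥0∞) then v u hu else 0)
      map_add' := fun x y => by
        show (x + y).1 • (if hu : a ≤ (u : ℝ≥0∞) then v u hu else 0)
            = x.1 • (if hu : a ≤ (u : ℝ≥0∞) then v u hu else 0)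
            + y.1 • (if hu : a ≤ (u : ℝ≥0∞) then v u hu else 0)
        rw [show (x + y).1 = x.1 + y.1 from rfl, add_smul]
      map_smul' := fun c x => by
        show (c • x).1 • (if hu : a ≤ (u : ℝ≥0∞) then v u hu else 0)
            = c • (x.1 • (if hu : a ≤ (u : ℝ≥0∞) then v u hu else 0))
        rw [show (c • x).1 = c * x.1 from rfl, mul_smul] }
  naturality {u u'} f := by
    have huu' : u ≤ u' := leOfHom f
    have hf : f = homOfLE huu' := rfl
    subst hf
    ext x
    show ((intervalMod a ⊤).map (homOfLE huu') x).1 • (if hu : a ≤ (u' : ℝ≥0∞) then v u' hu else 0)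
      = V.map (homOfLE huu') (x.1 • (if hu : a ≤ (u : ℝ≥0∞) then v u hu else 0))
    rw [intervalMod_map_coe, map_smul]
    by_cases hu : a ≤ (u : ℝ≥0∞)
    · have hu' : a ≤ (u' : ℝ≥0∞) := hu.trans (by exact_mod_cast huu')
      rw [dif_pos hu, dif_pos hu', hv u u' huu' hu]
    · have hx0 : x.1 = 0 := by
        have hle : icar a ⊤ u ≤ ⊥ := le_of_eq (icar_eq_bot hu)
        simpa using hle x.2
      rw [hx0, zero_smul, zero_smul]

lemma fromIntervalE_genE (a : ℝ≥0∞) (V : PersMod) (v) (hv) (u : ℝ≥0) (hu : a ≤ (u : ℝ≥0∞)) :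
    (fromIntervalE a V v hv).app u (genE a u hu) = v u hu := by
  show (1 : ℚ) • (if h : a ≤ (u : ℝ≥0∞) then v u h else 0) = v u hu
  rw [dif_pos hu, one_smul]

lemma intervalHom_ext {a : ℝ≥0∞} {V : PersMod} {F G : intervalMod a ⊤ ⟶ V}
    (h : ∀ (u : ℝ≥0) (hu : a ≤ (u : ℝ≥0∞)),
      F.app u (genE a u hu) = G.app u (genE a u hu)) : F = G := by
  apply NatTrans.ext
  funext u
  apply ModuleCat.hom_ext
  apply LinearMap.ext
  intro x
  by_cases hu : a ≤ (u : ℝ≥0∞)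
  · rw [show x = x.1 • genE a u hu from elem_eq_smul_genE hu x, map_smul, map_smul]
    exact congrArg _ (h u hu)
  · rw [elem_eq_zero hu x, map_zero, map_zero]

lemma intervalHom_app_genE {a : ℝ≥0∞} {V : PersMod} (F : intervalMod a ⊤ ⟶ V)
    {u u' : ℝ≥0} (huu' : u ≤ u') (hu : a ≤ (u : ℝ≥0∞)) (hu' : a ≤ (u' : ℝ≥0∞)) :
    F.app u' (genE a u' hu') = V.map (homOfLE huu') (F.app u (genE a u hu)) := by
  rw [← intervalMod_map_genE huu' hu hu', nat_app]

end Aux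

end Pers
namespace Pers

section TwoStepAPI

lemma pers_comp_app {V W Z : PersMod} (F : V ⟶ W) (G : W ⟶ Z) (u : ℝ≥0) (x : V.obj u) :
    (F ≫ G).app u x = G.app u (F.app u x) := rfl

lemma pers_zero_app (V W : PersMod) (u : ℝ≥0) (x : V.obj u) :
    (0 : V ⟶ W).app u x = 0 := by
  rw [show (0 : V ⟶ W).app u = 0 from rfl]
  rfl

lemma phi_self (m : ℕ) (c d : ℝ≥0∞) : phi m c d m = c := if_pos rfl

lemma phi_succ (m : ℕ) (c d : ℝ≥0∞) : phi m c d (m+1) = d := by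
  unfold phi
  rw [if_neg (by omega : ¬ m + 1 = m), if_pos rfl]

lemma phi_other (m : ℕ) (c d : ℝ≥0∞) {n : ℕ} (h1 : ¬ n = m) (h2 : ¬ n = m + 1) :
    phi m c d n = ⊤ := by
  unfold phi; rw [if_neg h1, if_neg h2]

lemma not_top_le_coe' (u : ℝ≥0) : ¬ ((⊤:ℝ≥0∞) ≤ (u:ℝ≥0∞)) :=
  fun h => ENNReal.coe_ne_top (top_le_iff.1 h)

lemma intervalModIncl_genE {a b : ℝ≥0∞} (hba : b ≤ a) (u : ℝ≥0) (h : a ≤ (u:ℝ≥0∞))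
    (h' : b ≤ (u:ℝ≥0∞)) :
    (intervalModIncl ⊤ hba).app u (genE a u h) = genE b u h' := Subtype.ext rfl

variable (m : ℕ) (c d : ℝ≥0∞) (V : pCh)
variable (vz : ∀ u : ℝ≥0, d ≤ (u:ℝ≥0∞) → (V.X (m+1)).obj u)
variable (vw : ∀ u : ℝ≥0, c ≤ (u:ℝ≥0∞) → (V.X m).obj u)

def tsData : ∀ (n : ℕ) (u : ℝ≥0), phi m c d n ≤ (u:ℝ≥0∞) → (V.X n).obj u := fun n u h =>
  if hn : n = m then
    cast (by rw [hn]) (vw u (le_of_eq_of_le (phi_self m c d).symm (hn ▸ h)))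
  else if hn1 : n = m + 1 then
    cast (by rw [hn1]) (vz u (le_of_eq_of_le (phi_succ m c d).symm (hn1 ▸ h)))
  else absurd (le_of_eq_of_le (phi_other m c d hn hn1).symm h) (not_top_le_coe' u)

lemma tsData_self (u : ℝ≥0) (h : phi m c d m ≤ (u:ℝ≥0∞)) (hc : c ≤ (u:ℝ≥0∞)) :
    tsData m c d V vz vw m u h = vw u hc := by
  unfold tsData
  rw [dif_pos rfl]
  exact cast_eq _ _

lemma tsData_succ (u : ℝ≥0) (h : phi m c d (m+1) ≤ (u:ℝ≥0∞)) (hd : d ≤ (u:ℝ≥0∞)) :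
    tsData m c d V vz vw (m+1) u h = vz u hd := by
  unfold tsData
  rw [dif_neg (by omega : ¬ m + 1 = m), dif_pos rfl]
  exact cast_eq _ _

lemma twoStep_d_genE (hdc : d ≤ c) (u : ℝ≥0) (hu : phi m c d m ≤ (u:ℝ≥0∞))
    (hu' : phi m c d (m+1) ≤ (u:ℝ≥0∞)) :
    ((twoStep m c d).d m (m+1)).app u (genE _ u hu) = genE _ u hu' := by
  have hd1 : (twoStep m c d).d m (m+1)
      = intervalModHom ⊤ (phi m c d m) (phi m c d (m+1)) := by
    simp [twoStep]
  rw [hd1]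
  simp only [intervalModHom]
  rw [dif_pos (show phi m c d (m+1) ≤ phi m c d m by
      rw [phi_self, phi_succ]; exact hdc)]
  exact intervalModIncl_genE _ u hu hu'

lemma twoStep_d_ne {i j : ℕ} (h : ¬(i = m ∧ j = m+1)) : (twoStep m c d).d i j = 0 := by
  simp only [twoStep]
  rw [if_neg h]
  rfl

lemma tsData_nat
    (hvz : ∀ (u u' : ℝ≥0) (huu' : u ≤ u') (hu : d ≤ (u:ℝ≥0∞)),
      (V.X (m+1)).map (homOfLE huu') (vz u hu) = vz u' (hu.trans (by exact_mod_cast huu')))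
    (hvw : ∀ (u u' : ℝ≥0) (huu' : u ≤ u') (hu : c ≤ (u:ℝ≥0∞)),
      (V.X m).map (homOfLE huu') (vw u hu) = vw u' (hu.trans (by exact_mod_cast huu')))
    (n : ℕ) (u u' : ℝ≥0) (huu' : u ≤ u') (h : phi m c d n ≤ (u:ℝ≥0∞)) :
    (V.X n).map (homOfLE huu') (tsData m c d V vz vw n u h)
      = tsData m c d V vz vw n u' (h.trans (by exact_mod_cast huu')) := by
  by_cases hn : n = m
  · subst hn
    have hc : c ≤ (u:ℝ≥0∞) := le_of_eq_of_le (phi_self n c d).symm h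
    rw [tsData_self n c d V vz vw u h hc,
      tsData_self n c d V vz vw u' _ (hc.trans (by exact_mod_cast huu'))]
    exact hvw u u' huu' hc
  · by_cases hn1 : n = m + 1
    · subst hn1
      have hd0 : d ≤ (u:ℝ≥0∞) := le_of_eq_of_le (phi_succ m c d).symm h
      rw [tsData_succ m c d V vz vw u h hd0,
        tsData_succ m c d V vz vw u' _ (hd0.trans (by exact_mod_cast huu'))]
      exact hvz u u' huu' hd0
    · exact absurd (le_of_eq_of_le (phi_other m c d hn hn1).symm h) (not_top_le_coe' u)

def mkTwoStepHom
    (hvz : ∀ (u u' : ℝ≥0) (huu' : u ≤ u') (hu : d ≤ (u:ℝ≥0∞)),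
      (V.X (m+1)).map (homOfLE huu') (vz u hu) = vz u' (hu.trans (by exact_mod_cast huu')))
    (hvw : ∀ (u u' : ℝ≥0) (huu' : u ≤ u') (hu : c ≤ (u:ℝ≥0∞)),
      (V.X m).map (homOfLE huu') (vw u hu) = vw u' (hu.trans (by exact_mod_cast huu')))
    (hdc : d ≤ c)
    (hz : ∀ (u : ℝ≥0) (hu : d ≤ (u:ℝ≥0∞)), (V.d (m+1) (m+2)).app u (vz u hu) = 0)
    (hw : ∀ (u : ℝ≥0) (hu : c ≤ (u:ℝ≥0∞)),
      (V.d m (m+1)).app u (vw u hu) = vz u (hdc.trans hu)) :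
    twoStep m c d ⟶ V where
  f n := fromIntervalE (phi m c d n) (V.X n) (tsData m c d V vz vw n)
    (fun u u' huu' hu => tsData_nat m c d V vz vw hvz hvw n u u' huu' hu)
  comm' i j hij := by
    have hj : i + 1 = j := hij
    subst hj
    apply intervalHom_ext
    intro u hu
    change (V.d i (i+1)).app u ((fromIntervalE (phi m c d i) (V.X i) (tsData m c d V vz vw i)
        (fun u u' huu' hu => tsData_nat m c d V vz vw hvz hvw i u u' huu' hu)).app u (genE _ u hu))
      = (fromIntervalE (phi m c d (i+1)) (V.X (i+1)) (tsData m c d V vz vw (i+1))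
        (fun u u' huu' hu => tsData_nat m c d V vz vw hvz hvw (i+1) u u' huu' hu)).app u
        (((twoStep m c d).d i (i+1)).app u (genE _ u hu))
    rw [fromIntervalE_genE]
    by_cases hi : i = m
    · subst hi
      have hc : c ≤ (u:ℝ≥0∞) := le_of_eq_of_le (phi_self i c d).symm hu
      have hu' : phi i c d (i+1) ≤ (u:ℝ≥0∞) := by
        rw [phi_succ]; exact hdc.trans hc
      rw [tsData_self i c d V vz vw u hu hc, hw u hc]
      erw [twoStep_d_genE i c d hdc u hu hu']
      exact ((fromIntervalE_genE (phi i c d (i+1)) (V.X (i+1)) (tsData i c d V vz vw (i+1))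
          (fun u u' huu' hu => tsData_nat i c d V vz vw hvz hvw (i+1) u u' huu' hu) u hu').trans
        (tsData_succ i c d V vz vw u hu' (hdc.trans hc))).symm
    · by_cases hi1 : i = m + 1
      · subst hi1
        have hd0 : d ≤ (u:ℝ≥0∞) := le_of_eq_of_le (phi_succ m c d).symm hu
        rw [tsData_succ m c d V vz vw u hu hd0, hz u hd0,
          twoStep_d_ne m c d (by omega)]
        exact (map_zero _).symm
      · exact absurd (le_of_eq_of_le (phi_other m c d hi hi1).symm hu) (not_top_le_coe' u)

lemma mkTwoStepHom_f_self
    (hvz : ∀ (u u' : ℝ≥0) (huu' : u ≤ u') (hu : d ≤ (u:ℝ≥0∞)),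
      (V.X (m+1)).map (homOfLE huu') (vz u hu) = vz u' (hu.trans (by exact_mod_cast huu')))
    (hvw : ∀ (u u' : ℝ≥0) (huu' : u ≤ u') (hu : c ≤ (u:ℝ≥0∞)),
      (V.X m).map (homOfLE huu') (vw u hu) = vw u' (hu.trans (by exact_mod_cast huu')))
    (hdc : d ≤ c)
    (hz : ∀ (u : ℝ≥0) (hu : d ≤ (u:ℝ≥0∞)), (V.d (m+1) (m+2)).app u (vz u hu) = 0)
    (hw : ∀ (u : ℝ≥0) (hu : c ≤ (u:ℝ≥0∞)),
      (V.d m (m+1)).app u (vw u hu) = vz u (hdc.trans hu))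
    (u : ℝ≥0) (hu : phi m c d m ≤ (u:ℝ≥0∞))
    (hc : c ≤ (u:ℝ≥0∞)) :
    ((mkTwoStepHom m c d V vz vw hvz hvw hdc hz hw).f m).app u (genE _ u hu) = vw u hc :=
  (fromIntervalE_genE (phi m c d m) (V.X m) (tsData m c d V vz vw m)
      (fun u u' huu' hu => tsData_nat m c d V vz vw hvz hvw m u u' huu' hu) u hu).trans
    (tsData_self m c d V vz vw u hu hc)

lemma mkTwoStepHom_f_succ
    (hvz : ∀ (u u' : ℝ≥0) (huu' : u ≤ u') (hu : d ≤ (u:ℝ≥0∞)),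
      (V.X (m+1)).map (homOfLE huu') (vz u hu) = vz u' (hu.trans (by exact_mod_cast huu')))
    (hvw : ∀ (u u' : ℝ≥0) (huu' : u ≤ u') (hu : c ≤ (u:ℝ≥0∞)),
      (V.X m).map (homOfLE huu') (vw u hu) = vw u' (hu.trans (by exact_mod_cast huu')))
    (hdc : d ≤ c)
    (hz : ∀ (u : ℝ≥0) (hu : d ≤ (u:ℝ≥0∞)), (V.d (m+1) (m+2)).app u (vz u hu) = 0)
    (hw : ∀ (u : ℝ≥0) (hu : c ≤ (u:ℝ≥0∞)),
      (V.d m (m+1)).app u (vw u hu) = vz u (hdc.trans hu))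
    (u : ℝ≥0) (hu : phi m c d (m+1) ≤ (u:ℝ≥0∞))
    (hd0 : d ≤ (u:ℝ≥0∞)) :
    ((mkTwoStepHom m c d V vz vw hvz hvw hdc hz hw).f (m+1)).app u (genE _ u hu) = vz u hd0 :=
  (fromIntervalE_genE (phi m c d (m+1)) (V.X (m+1)) (tsData m c d V vz vw (m+1))
      (fun u u' huu' hu => tsData_nat m c d V vz vw hvz hvw (m+1) u u' huu' hu) u hu).trans
    (tsData_succ m c d V vz vw u hu hd0)

lemma twoStepHom_ext {F G : twoStep m c d ⟶ V}
    (hz : ∀ (u : ℝ≥0) (hu : phi m c d (m+1) ≤ (u:ℝ≥0∞)),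
      (F.f (m+1)).app u (genE _ u hu) = (G.f (m+1)).app u (genE _ u hu))
    (hw : ∀ (u : ℝ≥0) (hu : phi m c d m ≤ (u:ℝ≥0∞)),
      (F.f m).app u (genE _ u hu) = (G.f m).app u (genE _ u hu)) : F = G := by
  apply HomologicalComplex.hom_ext
  intro n
  by_cases hn : n = m
  · subst hn; exact intervalHom_ext (hw)
  · by_cases hn1 : n = m + 1
    · subst hn1; exact intervalHom_ext (hz)
    · exact intervalHom_ext (fun u hu =>
        absurd (le_of_eq_of_le (phi_other m c d hn hn1).symm hu) (not_top_le_coe' u))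

end TwoStepAPI

end Pers
namespace Pers

section KeyLift

lemma pch_comp_app {A B C : pCh} (F : A ⟶ B) (G : B ⟶ C) (n : ℕ) (u : ℝ≥0)
    (x : (A.X n).obj u) :
    ((F ≫ G).f n).app u x = (G.f n).app u ((F.f n).app u x) := rfl

lemma hom_comm_app {A B : pCh} (F : A ⟶ B) (i : ℕ) (u : ℝ≥0) (x : (A.X i).obj u) :
    (B.d i (i+1)).app u ((F.f i).app u x) = (F.f (i+1)).app u ((A.d i (i+1)).app u x) := by
  have h := F.comm i (i+1)
  calc (B.d i (i+1)).app u ((F.f i).app u x) = ((F.f i ≫ B.d i (i+1)).app u) x := rfl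
    _ = ((A.d i (i+1) ≫ F.f (i+1)).app u) x := by rw [h]
    _ = _ := rfl

lemma sphereToDisk_f_genE (k : ℕ) (s : ℝ≥0) (t : ℝ≥0∞) (h : (s:ℝ≥0∞) ≤ t) (n : ℕ)
    (u : ℝ≥0) (hu : phi k t (s:ℝ≥0∞) n ≤ (u:ℝ≥0∞))
    (hu' : phi k (s:ℝ≥0∞) (s:ℝ≥0∞) n ≤ (u:ℝ≥0∞)) :
    ((sphereToDisk (k+1) s t h).f n).app u (genE _ u hu) = genE _ u hu' :=
  intervalModIncl_genE (phi_mono h le_rfl n) u hu hu'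

variable {E Bc : pCh} (p : E ⟶ Bc)

lemma keyLift_fin (hp : Inj Imem p) (k : ℕ) (s t : ℝ≥0) (hst : s < t)
    (ξ : (E.X (k+1)).obj s) (hξd : (E.d (k+1) (k+2)).app s ξ = 0)
    (η : (E.X k).obj t) (hηd : (E.d k (k+1)).app t η = (E.X (k+1)).map (homOfLE hst.le) ξ)
    (b : (Bc.X k).obj s)
    (hpξ : (p.f (k+1)).app s ξ = (Bc.d k (k+1)).app s b)
    (hpη : (p.f k).app t η = (Bc.X k).map (homOfLE hst.le) b) :
    ∃ e : (E.X k).obj s, (E.d k (k+1)).app s e = ξ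
      ∧ (E.X k).map (homOfLE hst.le) e = η ∧ (p.f k).app s e = b := by
  have hco : ((s:ℝ≥0):ℝ≥0∞) ≤ ((t:ℝ≥0):ℝ≥0∞) := ENNReal.coe_le_coe.mpr hst.le
  -- data for the top map (sphere → E)
  let VZ : ∀ u : ℝ≥0, ((s:ℝ≥0):ℝ≥0∞) ≤ (u:ℝ≥0∞) → (E.X (k+1)).obj u :=
    fun u hu => (E.X (k+1)).map (homOfLE (ENNReal.coe_le_coe.mp hu)) ξ
  let VW : ∀ u : ℝ≥0, ((t:ℝ≥0):ℝ≥0∞) ≤ (u:ℝ≥0∞) → (E.X k).obj u :=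
    fun u hu => (E.X k).map (homOfLE (ENNReal.coe_le_coe.mp hu)) η
  have HVZ : ∀ (u u' : ℝ≥0) (huu' : u ≤ u') (hu : ((s:ℝ≥0):ℝ≥0∞) ≤ (u:ℝ≥0∞)),
      (E.X (k+1)).map (homOfLE huu') (VZ u hu) = VZ u' (hu.trans (by exact_mod_cast huu')) :=
    fun u u' huu' hu => pmap_map _ _ _ ξ
  have HVW : ∀ (u u' : ℝ≥0) (huu' : u ≤ u') (hu : ((t:ℝ≥0):ℝ≥0∞) ≤ (u:ℝ≥0∞)),
      (E.X k).map (homOfLE huu') (VW u hu) = VW u' (hu.trans (by exact_mod_cast huu')) :=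
    fun u u' huu' hu => pmap_map _ _ _ η
  have HZ : ∀ (u : ℝ≥0) (hu : ((s:ℝ≥0):ℝ≥0∞) ≤ (u:ℝ≥0∞)),
      (E.d (k+1) (k+2)).app u (VZ u hu) = 0 := by
    intro u hu
    show (E.d (k+1) (k+2)).app u ((E.X (k+1)).map (homOfLE (ENNReal.coe_le_coe.mp hu)) ξ) = 0
    rw [nat_app (E.d (k+1) (k+2)), hξd, map_zero]
  have HW : ∀ (u : ℝ≥0) (hu : ((t:ℝ≥0):ℝ≥0∞) ≤ (u:ℝ≥0∞)),
      (E.d k (k+1)).app u (VW u hu) = VZ u (hco.trans hu) := by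
    intro u hu
    show (E.d k (k+1)).app u ((E.X k).map (homOfLE (ENNReal.coe_le_coe.mp hu)) η)
      = (E.X (k+1)).map (homOfLE (ENNReal.coe_le_coe.mp (hco.trans hu))) ξ
    rw [nat_app (E.d k (k+1)), hηd, pmap_map]
  let top : twoStep k (t:ℝ≥0∞) (s:ℝ≥0∞) ⟶ E :=
    mkTwoStepHom k (t:ℝ≥0∞) (s:ℝ≥0∞) E VZ VW HVZ HVW hco HZ HW
  -- data for the bottom map (disk → Bc)
  let WZ : ∀ u : ℝ≥0, ((s:ℝ≥0):ℝ≥0∞) ≤ (u:ℝ≥0∞) → (Bc.X (k+1)).obj u :=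
    fun u hu => (Bc.X (k+1)).map (homOfLE (ENNReal.coe_le_coe.mp hu)) ((Bc.d k (k+1)).app s b)
  let WW : ∀ u : ℝ≥0, ((s:ℝ≥0):ℝ≥0∞) ≤ (u:ℝ≥0∞) → (Bc.X k).obj u :=
    fun u hu => (Bc.X k).map (homOfLE (ENNReal.coe_le_coe.mp hu)) b
  have HWZ : ∀ (u u' : ℝ≥0) (huu' : u ≤ u') (hu : ((s:ℝ≥0):ℝ≥0∞) ≤ (u:ℝ≥0∞)),
      (Bc.X (k+1)).map (homOfLE huu') (WZ u hu) = WZ u' (hu.trans (by exact_mod_cast huu')) :=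
    fun u u' huu' hu => pmap_map _ _ _ _
  have HWW : ∀ (u u' : ℝ≥0) (huu' : u ≤ u') (hu : ((s:ℝ≥0):ℝ≥0∞) ≤ (u:ℝ≥0∞)),
      (Bc.X k).map (homOfLE huu') (WW u hu) = WW u' (hu.trans (by exact_mod_cast huu')) :=
    fun u u' huu' hu => pmap_map _ _ _ _
  have HZZ : ∀ (u : ℝ≥0) (hu : ((s:ℝ≥0):ℝ≥0∞) ≤ (u:ℝ≥0∞)),
      (Bc.d (k+1) (k+2)).app u (WZ u hu) = 0 := by
    intro u hu
    show (Bc.d (k+1) (k+2)).app u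
      ((Bc.X (k+1)).map (homOfLE (ENNReal.coe_le_coe.mp hu)) ((Bc.d k (k+1)).app s b)) = 0
    rw [nat_app (Bc.d (k+1) (k+2))]
    have hdd : (Bc.d (k+1) (k+2)).app s ((Bc.d k (k+1)).app s b) = 0 := by
      rw [← pers_comp_app, Bc.d_comp_d k (k+1) (k+2), pers_zero_app]
    rw [hdd, map_zero]
  have HWW2 : ∀ (u : ℝ≥0) (hu : ((s:ℝ≥0):ℝ≥0∞) ≤ (u:ℝ≥0∞)),
      (Bc.d k (k+1)).app u (WW u hu) = WZ u (le_rfl.trans hu) := by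
    intro u hu
    show (Bc.d k (k+1)).app u ((Bc.X k).map (homOfLE (ENNReal.coe_le_coe.mp hu)) b)
      = (Bc.X (k+1)).map (homOfLE (ENNReal.coe_le_coe.mp (le_rfl.trans hu))) ((Bc.d k (k+1)).app s b)
    rw [nat_app (Bc.d k (k+1))]
  let bottom : twoStep k (s:ℝ≥0∞) (s:ℝ≥0∞) ⟶ Bc :=
    mkTwoStepHom k (s:ℝ≥0∞) (s:ℝ≥0∞) Bc WZ WW HWZ HWW le_rfl HZZ HWW2
  -- evaluation facts
  have htopz : ∀ (u : ℝ≥0) (hu : phi k (t:ℝ≥0∞) (s:ℝ≥0∞) (k+1) ≤ (u:ℝ≥0∞))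
      (hsu : ((s:ℝ≥0):ℝ≥0∞) ≤ (u:ℝ≥0∞)),
      (top.f (k+1)).app u (genE _ u hu) = VZ u hsu :=
    fun u hu hsu => mkTwoStepHom_f_succ k _ _ E VZ VW HVZ HVW hco HZ HW u hu hsu
  have htopw : ∀ (u : ℝ≥0) (hu : phi k (t:ℝ≥0∞) (s:ℝ≥0∞) k ≤ (u:ℝ≥0∞))
      (htu : ((t:ℝ≥0):ℝ≥0∞) ≤ (u:ℝ≥0∞)),
      (top.f k).app u (genE _ u hu) = VW u htu :=
    fun u hu htu => mkTwoStepHom_f_self k _ _ E VZ VW HVZ HVW hco HZ HW u hu htu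
  have hbotz : ∀ (u : ℝ≥0) (hu : phi k (s:ℝ≥0∞) (s:ℝ≥0∞) (k+1) ≤ (u:ℝ≥0∞))
      (hsu : ((s:ℝ≥0):ℝ≥0∞) ≤ (u:ℝ≥0∞)),
      (bottom.f (k+1)).app u (genE _ u hu) = WZ u hsu :=
    fun u hu hsu => mkTwoStepHom_f_succ k _ _ Bc WZ WW HWZ HWW le_rfl HZZ HWW2 u hu hsu
  have hbotw : ∀ (u : ℝ≥0) (hu : phi k (s:ℝ≥0∞) (s:ℝ≥0∞) k ≤ (u:ℝ≥0∞))
      (hsu : ((s:ℝ≥0):ℝ≥0∞) ≤ (u:ℝ≥0∞)),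
      (bottom.f k).app u (genE _ u hu) = WW u hsu :=
    fun u hu hsu => mkTwoStepHom_f_self k _ _ Bc WZ WW HWZ HWW le_rfl HZZ HWW2 u hu hsu
  -- the commutative square
  have hw' : (show sphere (k+1) s (t:ℝ≥0∞) ⟶ E from top) ≫ p
      = sphereToDisk (k+1) s (t:ℝ≥0∞) (ENNReal.coe_le_coe.mpr hst.le) ≫ bottom := by
    apply twoStepHom_ext k (t:ℝ≥0∞) (s:ℝ≥0∞) Bc
    · intro u hu
      have hsu : ((s:ℝ≥0):ℝ≥0∞) ≤ (u:ℝ≥0∞) :=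
        le_of_eq_of_le (phi_succ k (t:ℝ≥0∞) (s:ℝ≥0∞)).symm hu
      have hu' : phi k (s:ℝ≥0∞) (s:ℝ≥0∞) (k+1) ≤ (u:ℝ≥0∞) := by
        rw [phi_succ]; exact hsu
      calc (((show sphere (k+1) s (t:ℝ≥0∞) ⟶ E from top) ≫ p).f (k+1)).app u (genE _ u hu)
          = (p.f (k+1)).app u ((top.f (k+1)).app u (genE _ u hu)) := rfl
        _ = (p.f (k+1)).app u (VZ u hsu) := by rw [htopz u hu hsu]
        _ = (Bc.X (k+1)).map (homOfLE (ENNReal.coe_le_coe.mp hsu)) ((p.f (k+1)).app s ξ) :=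
            nat_app (p.f (k+1)) _ ξ
        _ = WZ u hsu := by rw [hpξ]
        _ = (bottom.f (k+1)).app u (genE _ u hu') := (hbotz u hu' hsu).symm
        _ = (bottom.f (k+1)).app u
              (((sphereToDisk (k+1) s (t:ℝ≥0∞) (ENNReal.coe_le_coe.mpr hst.le)).f (k+1)).app
                u (genE _ u hu)) := by
            rw [sphereToDisk_f_genE k s (t:ℝ≥0∞) (ENNReal.coe_le_coe.mpr hst.le) (k+1) u hu hu']
        _ = _ := rfl
    · intro u hu
      have htu : ((t:ℝ≥0):ℝ≥0∞) ≤ (u:ℝ≥0∞) :=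
        le_of_eq_of_le (phi_self k (t:ℝ≥0∞) (s:ℝ≥0∞)).symm hu
      have hsu : ((s:ℝ≥0):ℝ≥0∞) ≤ (u:ℝ≥0∞) := hco.trans htu
      have hu' : phi k (s:ℝ≥0∞) (s:ℝ≥0∞) k ≤ (u:ℝ≥0∞) := by
        rw [phi_self]; exact hsu
      calc (((show sphere (k+1) s (t:ℝ≥0∞) ⟶ E from top) ≫ p).f k).app u (genE _ u hu)
          = (p.f k).app u ((top.f k).app u (genE _ u hu)) := rfl
        _ = (p.f k).app u (VW u htu) := by rw [htopw u hu htu]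
        _ = (Bc.X k).map (homOfLE (ENNReal.coe_le_coe.mp htu)) ((p.f k).app t η) :=
            nat_app (p.f k) _ η
        _ = (Bc.X k).map (homOfLE (ENNReal.coe_le_coe.mp htu))
              ((Bc.X k).map (homOfLE hst.le) b) := by rw [hpη]
        _ = WW u hsu := pmap_map _ _ _ b
        _ = (bottom.f k).app u (genE _ u hu') := (hbotw u hu' hsu).symm
        _ = (bottom.f k).app u
              (((sphereToDisk (k+1) s (t:ℝ≥0∞) (ENNReal.coe_le_coe.mpr hst.le)).f k).app
                u (genE _ u hu)) := by
            rw [sphereToDisk_f_genE k s (t:ℝ≥0∞) (ENNReal.coe_le_coe.mpr hst.le) k u hu hu']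
        _ = _ := rfl
  haveI hlp : HasLiftingProperty
      (sphereToDisk (k+1) s (t:ℝ≥0∞) (ENNReal.coe_le_coe.mpr hst.le)) p :=
    hp _ (Or.inl (I0mem.mk (k+1) s t hst))
  obtain ⟨⟨l, hfl, hfr⟩⟩ := (HasLiftingProperty.sq_hasLift (CommSq.mk hw')).exists_lift
  -- extract the element
  have hks : phi k (s:ℝ≥0∞) (s:ℝ≥0∞) k ≤ ((s:ℝ≥0):ℝ≥0∞) := le_of_eq (phi_self k _ _)
  have hks1 : phi k (s:ℝ≥0∞) (s:ℝ≥0∞) (k+1) ≤ ((s:ℝ≥0):ℝ≥0∞) := le_of_eq (phi_succ k _ _)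
  have hts1 : phi k (t:ℝ≥0∞) (s:ℝ≥0∞) (k+1) ≤ ((s:ℝ≥0):ℝ≥0∞) := le_of_eq (phi_succ k _ _)
  have htt : phi k (t:ℝ≥0∞) (s:ℝ≥0∞) k ≤ ((t:ℝ≥0):ℝ≥0∞) := le_of_eq (phi_self k _ _)
  have hkst : phi k (s:ℝ≥0∞) (s:ℝ≥0∞) k ≤ ((t:ℝ≥0):ℝ≥0∞) := by
    rw [phi_self]; exact hco
  refine ⟨(l.f k).app s (genE _ s hks), ?_, ?_, ?_⟩
  · -- d e = ξ
    calc (E.d k (k+1)).app s ((l.f k).app s (genE _ s hks))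
        = (l.f (k+1)).app s (((twoStep k (s:ℝ≥0∞) (s:ℝ≥0∞)).d k (k+1)).app s (genE _ s hks)) :=
          hom_comm_app l k s _
      _ = (l.f (k+1)).app s (genE _ s hks1) := by
          rw [twoStep_d_genE k (s:ℝ≥0∞) (s:ℝ≥0∞) le_rfl s hks hks1]
      _ = (l.f (k+1)).app s
            (((sphereToDisk (k+1) s (t:ℝ≥0∞) (ENNReal.coe_le_coe.mpr hst.le)).f (k+1)).app
              s (genE _ s hts1)) := by
          rw [sphereToDisk_f_genE k s (t:ℝ≥0∞) (ENNReal.coe_le_coe.mpr hst.le) (k+1) s hts1 hks1]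
      _ = ((sphereToDisk (k+1) s (t:ℝ≥0∞) (ENNReal.coe_le_coe.mpr hst.le) ≫ l).f (k+1)).app s
            (genE _ s hts1) := rfl
      _ = (top.f (k+1)).app s (genE _ s hts1) := by rw [hfl]; rfl
      _ = VZ s (le_refl _) := htopz s hts1 (le_refl _)
      _ = ξ := pmap_id _ _ ξ
  · -- restriction of e to t is η
    calc (E.X k).map (homOfLE hst.le) ((l.f k).app s (genE _ s hks))
        = (l.f k).app t (genE _ t hkst) := (intervalHom_app_genE (l.f k) hst.le hks hkst).symm
      _ = (l.f k).app t
            (((sphereToDisk (k+1) s (t:ℝ≥0∞) (ENNReal.coe_le_coe.mpr hst.le)).f k).app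
              t (genE _ t htt)) := by
          rw [sphereToDisk_f_genE k s (t:ℝ≥0∞) (ENNReal.coe_le_coe.mpr hst.le) k t htt hkst]
      _ = ((sphereToDisk (k+1) s (t:ℝ≥0∞) (ENNReal.coe_le_coe.mpr hst.le) ≫ l).f k).app t
            (genE _ t htt) := rfl
      _ = (top.f k).app t (genE _ t htt) := by rw [hfl]; rfl
      _ = VW t (le_refl _) := htopw t htt (le_refl _)
      _ = η := pmap_id _ _ η
  · -- p e = b
    calc (p.f k).app s ((l.f k).app s (genE _ s hks))
        = ((l ≫ p).f k).app s (genE _ s hks) := rfl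
      _ = (bottom.f k).app s (genE _ s hks) := by rw [hfr]; rfl
      _ = WW s (le_refl _) := hbotw s hks (le_refl _)
      _ = b := pmap_id _ _ b

lemma keyLift_inf (hp : Inj Imem p) (k : ℕ) (s : ℝ≥0)
    (ξ : (E.X (k+1)).obj s) (hξd : (E.d (k+1) (k+2)).app s ξ = 0)
    (b : (Bc.X k).obj s)
    (hpξ : (p.f (k+1)).app s ξ = (Bc.d k (k+1)).app s b) :
    ∃ e : (E.X k).obj s, (E.d k (k+1)).app s e = ξ ∧ (p.f k).app s e = b := by
  have hco : ((s:ℝ≥0):ℝ≥0∞) ≤ (⊤:ℝ≥0∞) := le_top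
  let VZ : ∀ u : ℝ≥0, ((s:ℝ≥0):ℝ≥0∞) ≤ (u:ℝ≥0∞) → (E.X (k+1)).obj u :=
    fun u hu => (E.X (k+1)).map (homOfLE (ENNReal.coe_le_coe.mp hu)) ξ
  let VW : ∀ u : ℝ≥0, (⊤:ℝ≥0∞) ≤ (u:ℝ≥0∞) → (E.X k).obj u :=
    fun u hu => absurd hu (not_top_le_coe' u)
  have HVZ : ∀ (u u' : ℝ≥0) (huu' : u ≤ u') (hu : ((s:ℝ≥0):ℝ≥0∞) ≤ (u:ℝ≥0∞)),
      (E.X (k+1)).map (homOfLE huu') (VZ u hu) = VZ u' (hu.trans (by exact_mod_cast huu')) :=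
    fun u u' huu' hu => pmap_map _ _ _ ξ
  have HVW : ∀ (u u' : ℝ≥0) (huu' : u ≤ u') (hu : (⊤:ℝ≥0∞) ≤ (u:ℝ≥0∞)),
      (E.X k).map (homOfLE huu') (VW u hu) = VW u' (hu.trans (by exact_mod_cast huu')) :=
    fun u u' huu' hu => absurd hu (not_top_le_coe' u)
  have HZ : ∀ (u : ℝ≥0) (hu : ((s:ℝ≥0):ℝ≥0∞) ≤ (u:ℝ≥0∞)),
      (E.d (k+1) (k+2)).app u (VZ u hu) = 0 := by
    intro u hu
    show (E.d (k+1) (k+2)).app u ((E.X (k+1)).map (homOfLE (ENNReal.coe_le_coe.mp hu)) ξ) = 0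
    rw [nat_app (E.d (k+1) (k+2)), hξd, map_zero]
  have HW : ∀ (u : ℝ≥0) (hu : (⊤:ℝ≥0∞) ≤ (u:ℝ≥0∞)),
      (E.d k (k+1)).app u (VW u hu) = VZ u (hco.trans hu) :=
    fun u hu => absurd hu (not_top_le_coe' u)
  let top : twoStep k (⊤:ℝ≥0∞) (s:ℝ≥0∞) ⟶ E :=
    mkTwoStepHom k (⊤:ℝ≥0∞) (s:ℝ≥0∞) E VZ VW HVZ HVW hco HZ HW
  let WZ : ∀ u : ℝ≥0, ((s:ℝ≥0):ℝ≥0∞) ≤ (u:ℝ≥0∞) → (Bc.X (k+1)).obj u :=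
    fun u hu => (Bc.X (k+1)).map (homOfLE (ENNReal.coe_le_coe.mp hu)) ((Bc.d k (k+1)).app s b)
  let WW : ∀ u : ℝ≥0, ((s:ℝ≥0):ℝ≥0∞) ≤ (u:ℝ≥0∞) → (Bc.X k).obj u :=
    fun u hu => (Bc.X k).map (homOfLE (ENNReal.coe_le_coe.mp hu)) b
  have HWZ : ∀ (u u' : ℝ≥0) (huu' : u ≤ u') (hu : ((s:ℝ≥0):ℝ≥0∞) ≤ (u:ℝ≥0∞)),
      (Bc.X (k+1)).map (homOfLE huu') (WZ u hu) = WZ u' (hu.trans (by exact_mod_cast huu')) :=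
    fun u u' huu' hu => pmap_map _ _ _ _
  have HWW : ∀ (u u' : ℝ≥0) (huu' : u ≤ u') (hu : ((s:ℝ≥0):ℝ≥0∞) ≤ (u:ℝ≥0∞)),
      (Bc.X k).map (homOfLE huu') (WW u hu) = WW u' (hu.trans (by exact_mod_cast huu')) :=
    fun u u' huu' hu => pmap_map _ _ _ _
  have HZZ : ∀ (u : ℝ≥0) (hu : ((s:ℝ≥0):ℝ≥0∞) ≤ (u:ℝ≥0∞)),
      (Bc.d (k+1) (k+2)).app u (WZ u hu) = 0 := by
    intro u hu
    show (Bc.d (k+1) (k+2)).app u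
      ((Bc.X (k+1)).map (homOfLE (ENNReal.coe_le_coe.mp hu)) ((Bc.d k (k+1)).app s b)) = 0
    rw [nat_app (Bc.d (k+1) (k+2))]
    have hdd : (Bc.d (k+1) (k+2)).app s ((Bc.d k (k+1)).app s b) = 0 := by
      rw [← pers_comp_app, Bc.d_comp_d k (k+1) (k+2), pers_zero_app]
    rw [hdd, map_zero]
  have HWW2 : ∀ (u : ℝ≥0) (hu : ((s:ℝ≥0):ℝ≥0∞) ≤ (u:ℝ≥0∞)),
      (Bc.d k (k+1)).app u (WW u hu) = WZ u (le_rfl.trans hu) := by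
    intro u hu
    show (Bc.d k (k+1)).app u ((Bc.X k).map (homOfLE (ENNReal.coe_le_coe.mp hu)) b)
      = (Bc.X (k+1)).map (homOfLE (ENNReal.coe_le_coe.mp (le_rfl.trans hu))) ((Bc.d k (k+1)).app s b)
    rw [nat_app (Bc.d k (k+1))]
  let bottom : twoStep k (s:ℝ≥0∞) (s:ℝ≥0∞) ⟶ Bc :=
    mkTwoStepHom k (s:ℝ≥0∞) (s:ℝ≥0∞) Bc WZ WW HWZ HWW le_rfl HZZ HWW2
  have htopz : ∀ (u : ℝ≥0) (hu : phi k (⊤:ℝ≥0∞) (s:ℝ≥0∞) (k+1) ≤ (u:ℝ≥0∞))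
      (hsu : ((s:ℝ≥0):ℝ≥0∞) ≤ (u:ℝ≥0∞)),
      (top.f (k+1)).app u (genE _ u hu) = VZ u hsu :=
    fun u hu hsu => mkTwoStepHom_f_succ k _ _ E VZ VW HVZ HVW hco HZ HW u hu hsu
  have hbotz : ∀ (u : ℝ≥0) (hu : phi k (s:ℝ≥0∞) (s:ℝ≥0∞) (k+1) ≤ (u:ℝ≥0∞))
      (hsu : ((s:ℝ≥0):ℝ≥0∞) ≤ (u:ℝ≥0∞)),
      (bottom.f (k+1)).app u (genE _ u hu) = WZ u hsu :=
    fun u hu hsu => mkTwoStepHom_f_succ k _ _ Bc WZ WW HWZ HWW le_rfl HZZ HWW2 u hu hsu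
  have hbotw : ∀ (u : ℝ≥0) (hu : phi k (s:ℝ≥0∞) (s:ℝ≥0∞) k ≤ (u:ℝ≥0∞))
      (hsu : ((s:ℝ≥0):ℝ≥0∞) ≤ (u:ℝ≥0∞)),
      (bottom.f k).app u (genE _ u hu) = WW u hsu :=
    fun u hu hsu => mkTwoStepHom_f_self k _ _ Bc WZ WW HWZ HWW le_rfl HZZ HWW2 u hu hsu
  have hw' : (show sphere (k+1) s (⊤:ℝ≥0∞) ⟶ E from top) ≫ p
      = sphereToDisk (k+1) s (⊤:ℝ≥0∞) le_top ≫ bottom := by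
    apply twoStepHom_ext k (⊤:ℝ≥0∞) (s:ℝ≥0∞) Bc
    · intro u hu
      have hsu : ((s:ℝ≥0):ℝ≥0∞) ≤ (u:ℝ≥0∞) :=
        le_of_eq_of_le (phi_succ k (⊤:ℝ≥0∞) (s:ℝ≥0∞)).symm hu
      have hu' : phi k (s:ℝ≥0∞) (s:ℝ≥0∞) (k+1) ≤ (u:ℝ≥0∞) := by
        rw [phi_succ]; exact hsu
      calc (((show sphere (k+1) s (⊤:ℝ≥0∞) ⟶ E from top) ≫ p).f (k+1)).app u (genE _ u hu)
          = (p.f (k+1)).app u ((top.f (k+1)).app u (genE _ u hu)) := rfl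
        _ = (p.f (k+1)).app u (VZ u hsu) := by rw [htopz u hu hsu]
        _ = (Bc.X (k+1)).map (homOfLE (ENNReal.coe_le_coe.mp hsu)) ((p.f (k+1)).app s ξ) :=
            nat_app (p.f (k+1)) _ ξ
        _ = WZ u hsu := by rw [hpξ]
        _ = (bottom.f (k+1)).app u (genE _ u hu') := (hbotz u hu' hsu).symm
        _ = (bottom.f (k+1)).app u
              (((sphereToDisk (k+1) s (⊤:ℝ≥0∞) le_top).f (k+1)).app
                u (genE _ u hu)) := by
            rw [sphereToDisk_f_genE k s (⊤:ℝ≥0∞) le_top (k+1) u hu hu']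
        _ = _ := rfl
    · intro u hu
      exact absurd (le_of_eq_of_le (phi_self k (⊤:ℝ≥0∞) (s:ℝ≥0∞)).symm hu) (not_top_le_coe' u)
  haveI hlp : HasLiftingProperty (sphereToDisk (k+1) s (⊤:ℝ≥0∞) le_top) p :=
    hp _ (Or.inr (IinfMem.mk (k+1) s))
  obtain ⟨⟨l, hfl, hfr⟩⟩ := (HasLiftingProperty.sq_hasLift (CommSq.mk hw')).exists_lift
  have hks : phi k (s:ℝ≥0∞) (s:ℝ≥0∞) k ≤ ((s:ℝ≥0):ℝ≥0∞) := le_of_eq (phi_self k _ _)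
  have hks1 : phi k (s:ℝ≥0∞) (s:ℝ≥0∞) (k+1) ≤ ((s:ℝ≥0):ℝ≥0∞) := le_of_eq (phi_succ k _ _)
  have hts1 : phi k (⊤:ℝ≥0∞) (s:ℝ≥0∞) (k+1) ≤ ((s:ℝ≥0):ℝ≥0∞) := le_of_eq (phi_succ k _ _)
  refine ⟨(l.f k).app s (genE _ s hks), ?_, ?_⟩
  · calc (E.d k (k+1)).app s ((l.f k).app s (genE _ s hks))
        = (l.f (k+1)).app s (((twoStep k (s:ℝ≥0∞) (s:ℝ≥0∞)).d k (k+1)).app s (genE _ s hks)) :=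
          hom_comm_app l k s _
      _ = (l.f (k+1)).app s (genE _ s hks1) := by
          rw [twoStep_d_genE k (s:ℝ≥0∞) (s:ℝ≥0∞) le_rfl s hks hks1]
      _ = (l.f (k+1)).app s
            (((sphereToDisk (k+1) s (⊤:ℝ≥0∞) le_top).f (k+1)).app
              s (genE _ s hts1)) := by
          rw [sphereToDisk_f_genE k s (⊤:ℝ≥0∞) le_top (k+1) s hts1 hks1]
      _ = ((sphereToDisk (k+1) s (⊤:ℝ≥0∞) le_top ≫ l).f (k+1)).app s
            (genE _ s hts1) := rfl
      _ = (top.f (k+1)).app s (genE _ s hts1) := by rw [hfl]; rfl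
      _ = VZ s (le_refl _) := htopz s hts1 (le_refl _)
      _ = ξ := pmap_id _ _ ξ
  · calc (p.f k).app s ((l.f k).app s (genE _ s hks))
        = ((l ≫ p).f k).app s (genE _ s hks) := rfl
      _ = (bottom.f k).app s (genE _ s hks) := by rw [hfr]; rfl
      _ = WW s (le_refl _) := hbotw s hks (le_refl _)
      _ = b := pmap_id _ _ b

end KeyLift

end Pers
namespace Pers

section MainAux

lemma d_d (V : pCh) (i : ℕ) (u : ℝ≥0) (x : (V.X i).obj u) :
    (V.d (i+1) (i+2)).app u ((V.d i (i+1)).app u x) = 0 := by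
  rw [← pers_comp_app, V.d_comp_d i (i+1) (i+2), pers_zero_app]

lemma iso_inj {M N : ModuleCat.{0} ℚ} (f : M ⟶ N) [IsIso f] : Function.Injective f := by
  intro x y hxy
  have h1 : (f ≫ inv f) x = (f ≫ inv f) y := by rw [mcomp_apply, mcomp_apply, hxy]
  rw [IsIso.hom_inv_id] at h1
  simpa using h1

lemma iso_surj {M N : ModuleCat.{0} ℚ} (f : M ⟶ N) [IsIso f] : Function.Surjective f := by
  intro y
  refine ⟨inv f y, ?_⟩
  rw [← mcomp_apply, IsIso.inv_hom_id]
  simp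

variable (T : Finset ℝ≥0)

/-- The largest critical value `≤ u`. -/
noncomputable def zoneF (u : ℝ≥0) : ℝ≥0 :=
  ((insert 0 T).filter (· ≤ u)).max' ⟨0, Finset.mem_filter.2 ⟨Finset.mem_insert_self 0 T, (zero_le : (0:ℝ≥0) ≤ u)⟩⟩

lemma zoneF_le (u : ℝ≥0) : zoneF T u ≤ u := by
  have h := Finset.max'_mem ((insert 0 T).filter (· ≤ u))
    ⟨0, Finset.mem_filter.2 ⟨Finset.mem_insert_self 0 T, (zero_le : (0:ℝ≥0) ≤ u)⟩⟩
  exact (Finset.mem_filter.1 h).2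

lemma zoneF_mem (u : ℝ≥0) : zoneF T u ∈ insert 0 T := by
  have h := Finset.max'_mem ((insert 0 T).filter (· ≤ u))
    ⟨0, Finset.mem_filter.2 ⟨Finset.mem_insert_self 0 T, (zero_le : (0:ℝ≥0) ≤ u)⟩⟩
  exact (Finset.mem_filter.1 h).1

lemma le_zoneF {c u : ℝ≥0} (hc : c ∈ insert 0 T) (hcu : c ≤ u) : c ≤ zoneF T u := by
  unfold zoneF
  exact Finset.le_max' ((insert 0 T).filter (· ≤ u)) c (Finset.mem_filter.2 ⟨hc, hcu⟩)

variable (X E Bc : pCh)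

/-- Product of the restriction maps on `X` and `E`. -/
noncomputable def prMap (k : ℕ) {u v : ℝ≥0} (h : u ≤ v) :
    ((X.X k).obj u × (E.X k).obj u) →ₗ[ℚ] ((X.X k).obj v × (E.X k).obj v) :=
  LinearMap.prodMap ((X.X k).map (homOfLE h)).hom ((E.X k).map (homOfLE h)).hom

/-- Product of the differentials on `X` and `E`. -/
noncomputable def dPr (k : ℕ) (u : ℝ≥0) :
    ((X.X k).obj u × (E.X k).obj u) →ₗ[ℚ] ((X.X (k+1)).obj u × (E.X (k+1)).obj u) :=
  LinearMap.prodMap ((X.d k (k+1)).app u).hom ((E.d k (k+1)).app u).hom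

variable (p : E ⟶ Bc) (g : X ⟶ Bc)

/-- The invariant for the Zorn argument: `G` is (the family of graphs of) a partial
lift of `g` through `p`, defined on a subcomplex of `X` generated at critical values. -/
structure GoodS (G : ∀ (k : ℕ) (u : ℝ≥0), Submodule ℚ ((X.X k).obj u × (E.X k).obj u)) :
    Prop where
  res : ∀ (k : ℕ) (u v : ℝ≥0) (h : u ≤ v), (G k u).map (prMap X E k h) ≤ G k v
  dcl : ∀ (k : ℕ) (u : ℝ≥0), (G k u).map (dPr X E k u) ≤ G (k+1) u
  graph : ∀ (k : ℕ) (u : ℝ≥0) (q : (X.X k).obj u × (E.X k).obj u),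
    q ∈ G k u → q.1 = 0 → q.2 = 0
  comp : ∀ (k : ℕ) (u : ℝ≥0) (q : (X.X k).obj u × (E.X k).obj u),
    q ∈ G k u → (p.f k).app u q.2 = (g.f k).app u q.1
  crit : ∀ (k : ℕ) (u : ℝ≥0), G k u ≤ (G k (zoneF T u)).map (prMap X E k (zoneF_le T u))

/-- The span of one new generator (and its restrictions), in all degrees and times. -/
noncomputable def Next (k : ℕ) (c : ℝ≥0) (y : (X.X k).obj c) (e : (E.X k).obj c) :
    ∀ (k' : ℕ) (u : ℝ≥0), Submodule ℚ ((X.X k').obj u × (E.X k').obj u) := fun k' u =>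
  if h : k' = k ∧ c ≤ u then
    Submodule.span ℚ {cast (by rw [h.1])
      ((((X.X k).map (homOfLE h.2) y, (E.X k).map (homOfLE h.2) e)) :
        (X.X k).obj u × (E.X k).obj u)}
  else ⊥

lemma Next_eq (k : ℕ) (c : ℝ≥0) (y : (X.X k).obj c) (e : (E.X k).obj c) (u : ℝ≥0)
    (hcu : c ≤ u) :
    Next X E k c y e k u
      = Submodule.span ℚ {((X.X k).map (homOfLE hcu) y, (E.X k).map (homOfLE hcu) e)} := by
  unfold Next
  rw [dif_pos ⟨rfl, hcu⟩, cast_eq]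

lemma Next_ne (k : ℕ) (c : ℝ≥0) (y : (X.X k).obj c) (e : (E.X k).obj c) {k' : ℕ} {u : ℝ≥0}
    (h : ¬(k' = k ∧ c ≤ u)) : Next X E k c y e k' u = ⊥ := by
  unfold Next
  rw [dif_neg h]

end MainAux

end Pers
namespace Pers

section MainZorn

variable (T : Finset ℝ≥0) (X E Bc : pCh) (p : E ⟶ Bc) (g : X ⟶ Bc)

lemma extend_contra
    (M : ∀ (k : ℕ) (u : ℝ≥0), Submodule ℚ ((X.X k).obj u × (E.X k).obj u))
    (hM : GoodS T X E Bc p g M)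
    (hMmax : ∀ G', GoodS T X E Bc p g G' → M ≤ G' → G' ≤ M)
    (k : ℕ) (c : ℝ≥0) (hcmem : c ∈ insert 0 T)
    (y : (X.X k).obj c) (hy : ∀ e, (y, e) ∉ M k c)
    (e : (E.X k).obj c)
    (hdmem : ((X.d k (k+1)).app c y, (E.d k (k+1)).app c e) ∈ M (k+1) c)
    (hpe : (p.f k).app c e = (g.f k).app c y)
    (hsafe : ∀ (u : ℝ≥0) (hcu : c ≤ u) (e' : (E.X k).obj u),
      ((X.X k).map (homOfLE hcu) y, e') ∈ M k u →
      ((X.X k).map (homOfLE hcu) y, (E.X k).map (homOfLE hcu) e) ∈ M k u) :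
    False := by
  classical
  have hNle : ∀ (u : ℝ≥0) (hcu : c ≤ u) (q), q ∈ Next X E k c y e k u →
      ∃ a : ℚ, a • ((X.X k).map (homOfLE hcu) y, (E.X k).map (homOfLE hcu) e) = q := by
    intro u hcu q hq
    rw [Next_eq X E k c y e u hcu] at hq
    exact Submodule.mem_span_singleton.1 hq
  have hgood : GoodS T X E Bc p g (fun k' u => M k' u ⊔ Next X E k c y e k' u) := by
    constructor
    · -- res
      intro k' u v h
      rw [Submodule.map_sup]
      apply sup_le
      · exact le_trans (hM.res k' u v h) le_sup_left
      · by_cases hcase : k' = k ∧ c ≤ u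
        · obtain ⟨rfl, hcu⟩ := hcase
          rw [Next_eq X E k' c y e u hcu, Submodule.map_span, Set.image_singleton]
          have himg : (prMap X E k' h) ((X.X k').map (homOfLE hcu) y, (E.X k').map (homOfLE hcu) e)
              = ((X.X k').map (homOfLE (hcu.trans h)) y,
                 (E.X k').map (homOfLE (hcu.trans h)) e) := by
            show ((X.X k').map (homOfLE h) ((X.X k').map (homOfLE hcu) y),
              (E.X k').map (homOfLE h) ((E.X k').map (homOfLE hcu) e)) = _
            rw [pmap_map, pmap_map]
          rw [himg, ← Next_eq X E k' c y e v (hcu.trans h)]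
          exact le_sup_right
        · rw [Next_ne X E k c y e hcase, Submodule.map_bot]
          exact bot_le
    · -- dcl
      intro k' u
      rw [Submodule.map_sup]
      apply sup_le
      · exact le_trans (hM.dcl k' u) le_sup_left
      · by_cases hcase : k' = k ∧ c ≤ u
        · obtain ⟨rfl, hcu⟩ := hcase
          rw [Next_eq X E k' c y e u hcu, Submodule.map_span, Set.image_singleton]
          have himg : (dPr X E k' u) ((X.X k').map (homOfLE hcu) y, (E.X k').map (homOfLE hcu) e)
              = prMap X E (k'+1) hcu ((X.d k' (k'+1)).app c y, (E.d k' (k'+1)).app c e) := by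
            show ((X.d k' (k'+1)).app u ((X.X k').map (homOfLE hcu) y),
                (E.d k' (k'+1)).app u ((E.X k').map (homOfLE hcu) e))
              = ((X.X (k'+1)).map (homOfLE hcu) ((X.d k' (k'+1)).app c y),
                (E.X (k'+1)).map (homOfLE hcu) ((E.d k' (k'+1)).app c e))
            rw [nat_app (X.d k' (k'+1)), nat_app (E.d k' (k'+1))]
          rw [himg]
          have hmem : prMap X E (k'+1) hcu ((X.d k' (k'+1)).app c y, (E.d k' (k'+1)).app c e)
              ∈ M (k'+1) u := hM.res (k'+1) c u hcu (Submodule.mem_map_of_mem hdmem)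
          refine le_trans ?_ le_sup_left
          rw [Submodule.span_singleton_le_iff_mem]
          exact hmem
        · rw [Next_ne X E k c y e hcase, Submodule.map_bot]
          exact bot_le
    · -- graph
      intro k' u q hq hq1
      obtain ⟨qm, hqm, qn, hqn, hsum⟩ := Submodule.mem_sup.1 hq
      by_cases hcase : k' = k ∧ c ≤ u
      · obtain ⟨rfl, hcu⟩ := hcase
        obtain ⟨a, ha⟩ := hNle u hcu qn hqn
        by_cases ha0 : a = 0
        · subst ha0
          rw [zero_smul] at ha
          have hq' : q = qm := by rw [← hsum, ← ha, add_zero]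
          exact hM.graph k' u q (hq' ▸ hqm) hq1
        · have h3 : qm.1 + a • ((X.X k').map (homOfLE hcu) y) = 0 := by
            have h4 := congrArg Prod.fst hsum
            rw [← ha, hq1] at h4
            exact h4
          have h5 : (X.X k').map (homOfLE hcu) y = (-a⁻¹) • qm.1 := by
            have h6 : a • ((X.X k').map (homOfLE hcu) y) = -qm.1 :=
              eq_neg_of_add_eq_zero_right h3
            have h7 := congrArg (fun z => a⁻¹ • z) h6
            dsimp only at h7
            rw [inv_smul_smul₀ ha0] at h7
            rw [h7, smul_neg, neg_smul]
          have hy_u : ((X.X k').map (homOfLE hcu) y, (E.X k').map (homOfLE hcu) e) ∈ M k' u := by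
            apply hsafe u hcu ((-a⁻¹) • qm.2)
            have h1 : ((-a⁻¹) • qm) ∈ M k' u := Submodule.smul_mem _ _ hqm
            have h2 : ((-a⁻¹) • qm) = ((X.X k').map (homOfLE hcu) y, (-a⁻¹) • qm.2) :=
              Prod.ext (by rw [show ((-a⁻¹ : ℚ) • qm).1 = (-a⁻¹) • qm.1 from rfl, ← h5]) rfl
            rwa [h2] at h1
          have hqnM : qn ∈ M k' u := by
            rw [← ha]
            exact Submodule.smul_mem _ _ hy_u
          have hqM : q ∈ M k' u := by
            rw [← hsum]
            exact Submodule.add_mem _ hqm hqnM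
          exact hM.graph k' u q hqM hq1
      · rw [Next_ne X E k c y e hcase] at hqn
        have hqn0 : qn = 0 := (Submodule.mem_bot ℚ).1 hqn
        have hq' : q = qm := by rw [← hsum, hqn0, add_zero]
        exact hM.graph k' u q (hq' ▸ hqm) hq1
    · -- comp
      intro k' u q hq
      obtain ⟨qm, hqm, qn, hqn, hsum⟩ := Submodule.mem_sup.1 hq
      have hqm' := hM.comp k' u qm hqm
      have hqn' : (p.f k').app u qn.2 = (g.f k').app u qn.1 := by
        by_cases hcase : k' = k ∧ c ≤ u
        · obtain ⟨rfl, hcu⟩ := hcase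
          obtain ⟨a, ha⟩ := hNle u hcu qn hqn
          rw [← ha]
          show (p.f k').app u (a • (E.X k').map (homOfLE hcu) e)
            = (g.f k').app u (a • (X.X k').map (homOfLE hcu) y)
          rw [map_smul, map_smul, nat_app (p.f k'), hpe, ← nat_app (g.f k')]
        · rw [Next_ne X E k c y e hcase] at hqn
          have hqn0 : qn = 0 := (Submodule.mem_bot ℚ).1 hqn
          rw [hqn0]
          show (p.f k').app u 0 = (g.f k').app u 0
          rw [map_zero, map_zero]
      rw [← hsum]
      show (p.f k').app u (qm.2 + qn.2) = (g.f k').app u (qm.1 + qn.1)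
      rw [map_add, map_add, hqm', hqn']
    · -- crit
      intro k' u
      intro q hq
      obtain ⟨qm, hqm, qn, hqn, hsum⟩ := Submodule.mem_sup.1 hq
      rw [← hsum]
      apply Submodule.add_mem
      · exact Submodule.map_mono le_sup_left (hM.crit k' u hqm)
      · by_cases hcase : k' = k ∧ c ≤ u
        · obtain ⟨rfl, hcu⟩ := hcase
          obtain ⟨a, ha⟩ := hNle u hcu qn hqn
          have hcz : c ≤ zoneF T u := le_zoneF T hcmem hcu
          refine Submodule.mem_map.2
            ⟨a • ((X.X k').map (homOfLE hcz) y, (E.X k').map (homOfLE hcz) e), ?_, ?_⟩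
          · apply Submodule.mem_sup_right
            rw [Next_eq X E k' c y e (zoneF T u) hcz]
            exact Submodule.smul_mem _ _ (Submodule.mem_span_singleton_self _)
          · rw [map_smul]
            have himg : prMap X E k' (zoneF_le T u)
                ((X.X k').map (homOfLE hcz) y, (E.X k').map (homOfLE hcz) e)
                = ((X.X k').map (homOfLE hcu) y, (E.X k').map (homOfLE hcu) e) := by
              show ((X.X k').map (homOfLE (zoneF_le T u)) ((X.X k').map (homOfLE hcz) y),
                (E.X k').map (homOfLE (zoneF_le T u)) ((E.X k').map (homOfLE hcz) e)) = _
              rw [pmap_map, pmap_map]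
            rw [himg, ha]
        · rw [Next_ne X E k c y e hcase] at hqn
          have hqn0 : qn = 0 := (Submodule.mem_bot ℚ).1 hqn
          rw [hqn0]
          exact Submodule.zero_mem _
  have hle : M ≤ (fun k' u => M k' u ⊔ Next X E k c y e k' u) := fun k' u => le_sup_left
  have hle' : (fun k' u => M k' u ⊔ Next X E k c y e k' u) ≤ M := hMmax _ hgood hle
  have hyE : (y, e) ∈ Next X E k c y e k c := by
    rw [Next_eq X E k c y e c le_rfl]
    have heq : ((X.X k).map (homOfLE (le_refl c)) y, (E.X k).map (homOfLE (le_refl c)) e)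
        = (y, e) := by rw [pmap_id, pmap_id]
    rw [heq]
    exact Submodule.mem_span_singleton_self _
  exact hy e (hle' k c (Submodule.mem_sup_right hyE))

end MainZorn

end Pers
namespace Pers

section MainFinal

variable (T : Finset ℝ≥0) (X E Bc : pCh) (p : E ⟶ Bc) (g : X ⟶ Bc)

lemma exists_lift_of_tame
    (hT : ∀ (s u : ℝ≥0) (h : s ≤ u), (∀ r ∈ T, ¬(s < r ∧ r ≤ u)) → ∀ k : ℕ,
      IsIso ((X.X k).map (homOfLE h)))
    (hp : Inj Imem p) :
    ∃ lft : X ⟶ E, lft ≫ p = g := by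
  classical
  have hiso : ∀ (k : ℕ) (u : ℝ≥0), IsIso ((X.X k).map (homOfLE (zoneF_le T u))) := by
    intro k u
    refine hT (zoneF T u) u (zoneF_le T u) ?_ k
    intro r hr hcon
    exact absurd (le_zoneF T (Finset.mem_insert_of_mem hr) hcon.2) (not_le.2 hcon.1)
  -- Zorn's lemma
  have hub : ∀ cs ⊆ {G | GoodS T X E Bc p g G}, IsChain (· ≤ ·) cs →
      ∃ ub ∈ {G | GoodS T X E Bc p g G}, ∀ z ∈ cs, z ≤ ub := by
    intro cs hcs hchain
    rcases Set.eq_empty_or_nonempty cs with hempty | ⟨G₀, hG₀⟩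
    · refine ⟨(fun k u => ⊥), ?_, ?_⟩
      · constructor
        · intro k u v h; rw [Submodule.map_bot]
        · intro k u; rw [Submodule.map_bot]
        · intro k u q hq _
          have hq0 : q = 0 := (Submodule.mem_bot ℚ).1 hq
          simp [hq0]
        · intro k u q hq
          have hq0 : q = 0 := (Submodule.mem_bot ℚ).1 hq
          simp [hq0]
        · intro k u; exact bot_le
      · intro z hz
        rw [hempty] at hz
        exact absurd hz (Set.notMem_empty z)
    · haveI : Nonempty cs := ⟨⟨G₀, hG₀⟩⟩
      have hdir : ∀ (k : ℕ) (u : ℝ≥0), Directed (· ≤ ·) (fun (G : cs) => G.1 k u) := by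
        intro k u A B
        obtain ⟨C, hCc, hAC, hBC⟩ := hchain.directedOn A.1 A.2 B.1 B.2
        exact ⟨⟨C, hCc⟩, hAC k u, hBC k u⟩
      refine ⟨(fun k u => ⨆ (G : cs), G.1 k u), ?_, ?_⟩
      · constructor
        · intro k u v h
          rw [Submodule.map_iSup]
          exact iSup_le fun G =>
            le_trans ((hcs G.2).res k u v h) (le_iSup (fun (G : cs) => G.1 k v) G)
        · intro k u
          rw [Submodule.map_iSup]
          exact iSup_le fun G =>
            le_trans ((hcs G.2).dcl k u) (le_iSup (fun (G : cs) => G.1 (k+1) u) G)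
        · intro k u q hq hq1
          obtain ⟨G, hG⟩ := (Submodule.mem_iSup_of_directed _ (hdir k u)).1 hq
          exact (hcs G.2).graph k u q hG hq1
        · intro k u q hq
          obtain ⟨G, hG⟩ := (Submodule.mem_iSup_of_directed _ (hdir k u)).1 hq
          exact (hcs G.2).comp k u q hG
        · intro k u
          refine iSup_le fun G => le_trans ((hcs G.2).crit k u) (Submodule.map_mono ?_)
          exact le_iSup (fun (G : cs) => G.1 k (zoneF T u)) G
      · intro z hz k u
        exact le_iSup (fun (G : cs) => G.1 k u) ⟨z, hz⟩
  obtain ⟨M, hMmax⟩ := zorn_le₀ {G | GoodS T X E Bc p g G} hub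
  have hM : GoodS T X E Bc p g M := hMmax.1
  -- uniqueness of partners
  have uniq : ∀ (k : ℕ) (u : ℝ≥0) (x : (X.X k).obj u) (e1 e2 : (E.X k).obj u),
      (x, e1) ∈ M k u → (x, e2) ∈ M k u → e1 = e2 := by
    intro k u x e1 e2 h1 h2
    have h3 := Submodule.sub_mem _ h1 h2
    have h4 : ((x, e1) - (x, e2) : _ × _) = (0, e1 - e2) := by
      show (x - x, e1 - e2) = (0, e1 - e2)
      rw [sub_self]
    rw [h4] at h3
    have h5 := hM.graph k u _ h3 rfl
    exact sub_eq_zero.1 h5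
  -- totality
  have total : ∀ (k : ℕ) (u : ℝ≥0) (x : (X.X k).obj u), ∃ e, (x, e) ∈ M k u := by
    by_contra hcon
    push_neg at hcon
    obtain ⟨k₀, u₀, x₀, hx₀⟩ := hcon
    have hcrit : ∃ (c : ℝ≥0), c ∈ insert 0 T ∧
        ∃ x₁ : (X.X k₀).obj c, ∀ e, (x₁, e) ∉ M k₀ c := by
      haveI := hiso k₀ u₀
      obtain ⟨x₁, hx₁⟩ := iso_surj ((X.X k₀).map (homOfLE (zoneF_le T u₀))) x₀
      refine ⟨zoneF T u₀, zoneF_mem T u₀, x₁, ?_⟩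
      intro e he
      have h2 := hM.res k₀ (zoneF T u₀) u₀ (zoneF_le T u₀) (Submodule.mem_map_of_mem he)
      have h3 : prMap X E k₀ (zoneF_le T u₀) (x₁, e)
          = (x₀, (E.X k₀).map (homOfLE (zoneF_le T u₀)) e) := by
        show ((X.X k₀).map (homOfLE (zoneF_le T u₀)) x₁,
          (E.X k₀).map (homOfLE (zoneF_le T u₀)) e)
          = (x₀, (E.X k₀).map (homOfLE (zoneF_le T u₀)) e)
        rw [hx₁]
      rw [h3] at h2
      exact hx₀ _ h2
    obtain ⟨c, hcmem, x₁, hx₁nd⟩ := hcrit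
    have hkey : ∃ (k : ℕ) (y : (X.X k).obj c), (∀ e, (y, e) ∉ M k c) ∧
        ∃ ξ, ((X.d k (k+1)).app c y, ξ) ∈ M (k+1) c := by
      by_cases hdx : ∃ ξ, ((X.d k₀ (k₀+1)).app c x₁, ξ) ∈ M (k₀+1) c
      · exact ⟨k₀, x₁, hx₁nd, hdx⟩
      · refine ⟨k₀+1, (X.d k₀ (k₀+1)).app c x₁, ?_, 0, ?_⟩
        · intro e he
          exact hdx ⟨e, he⟩
        · have hdd : (X.d (k₀+1) (k₀+2)).app c ((X.d k₀ (k₀+1)).app c x₁) = 0 := d_d X k₀ c x₁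
          rw [hdd]
          exact Submodule.zero_mem _
    obtain ⟨k, y, hy, ξ, hξ⟩ := hkey
    have hdξ : (E.d (k+1) (k+2)).app c ξ = 0 := by
      have h1 := hM.dcl (k+1) c (Submodule.mem_map_of_mem hξ)
      have h2 : dPr X E (k+1) c ((X.d k (k+1)).app c y, ξ)
          = (0, (E.d (k+1) (k+2)).app c ξ) := by
        show ((X.d (k+1) (k+2)).app c ((X.d k (k+1)).app c y),
          (E.d (k+1) (k+2)).app c ξ) = (0, (E.d (k+1) (k+2)).app c ξ)
        rw [d_d X k c y]
      rw [h2] at h1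
      exact hM.graph (k+2) c _ h1 rfl
    have hpξ : (p.f (k+1)).app c ξ = (Bc.d k (k+1)).app c ((g.f k).app c y) :=
      (hM.comp (k+1) c _ hξ).trans (hom_comm_app g k c y).symm
    have hentry : ∀ (u : ℝ≥0) (hcu : c ≤ u) (e' : (E.X k).obj u),
        ((X.X k).map (homOfLE hcu) y, e') ∈ M k u →
        (c ≤ zoneF T u ∧ ∃ e'',
          ((X.X k).map (homOfLE (le_zoneF T hcmem hcu)) y, e'') ∈ M k (zoneF T u)) := by
      intro u hcu e' he'
      have hcz : c ≤ zoneF T u := le_zoneF T hcmem hcu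
      refine ⟨hcz, ?_⟩
      obtain ⟨q', hq', hq'e⟩ := Submodule.mem_map.1 (hM.crit k u he')
      haveI := hiso k u
      have h1 : (X.X k).map (homOfLE (zoneF_le T u)) q'.1 = (X.X k).map (homOfLE hcu) y :=
        congrArg Prod.fst hq'e
      have h2 : (X.X k).map (homOfLE hcu) y
          = (X.X k).map (homOfLE (zoneF_le T u)) ((X.X k).map (homOfLE hcz) y) := by
        rw [pmap_map]
      have h3 : q'.1 = (X.X k).map (homOfLE hcz) y :=
        iso_inj ((X.X k).map (homOfLE (zoneF_le T u))) (h1.trans h2)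
      refine ⟨q'.2, ?_⟩
      rw [← h3]
      rwa [Prod.mk.eta]
    by_cases hTcne : ((insert 0 T).filter
        (fun r => ∃ (hcr : c ≤ r), ∃ e'',
          ((X.X k).map (homOfLE hcr) y, e'') ∈ M k r)).Nonempty
    · -- there is an entry time
      obtain ⟨t₀, ht₀mem, ht₀min⟩ : ∃ t₀ ∈ ((insert 0 T).filter
          (fun r => ∃ (hcr : c ≤ r), ∃ e'',
            ((X.X k).map (homOfLE hcr) y, e'') ∈ M k r)),
          ∀ r ∈ ((insert 0 T).filter
          (fun r => ∃ (hcr : c ≤ r), ∃ e'',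
            ((X.X k).map (homOfLE hcr) y, e'') ∈ M k r)), t₀ ≤ r :=
        ⟨_, Finset.min'_mem _ hTcne, fun r hr => Finset.min'_le _ r hr⟩
      obtain ⟨ht₀T, hct₀, η, hη⟩ := Finset.mem_filter.1 ht₀mem
      have hct₀lt : c < t₀ := by
        rcases lt_or_eq_of_le hct₀ with hlt | heq
        · exact hlt
        · exfalso
          have h1 := hM.res k t₀ c heq.ge (Submodule.mem_map_of_mem hη)
          have h2 : prMap X E k heq.ge ((X.X k).map (homOfLE hct₀) y, η)
              = (y, (E.X k).map (homOfLE heq.ge) η) := by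
            show ((X.X k).map (homOfLE heq.ge) ((X.X k).map (homOfLE hct₀) y),
              (E.X k).map (homOfLE heq.ge) η) = (y, (E.X k).map (homOfLE heq.ge) η)
            rw [pmap_map, pmap_id]
          rw [h2] at h1
          exact hy _ h1
      have hηd : (E.d k (k+1)).app t₀ η = (E.X (k+1)).map (homOfLE hct₀lt.le) ξ := by
        apply uniq (k+1) t₀ ((X.d k (k+1)).app t₀ ((X.X k).map (homOfLE hct₀lt.le) y))
        · have h1 := hM.dcl k t₀ (Submodule.mem_map_of_mem hη)
          exact h1
        · have h1 := hM.res (k+1) c t₀ hct₀lt.le (Submodule.mem_map_of_mem hξ)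
          have h2 : prMap X E (k+1) hct₀lt.le ((X.d k (k+1)).app c y, ξ)
              = ((X.d k (k+1)).app t₀ ((X.X k).map (homOfLE hct₀lt.le) y),
                 (E.X (k+1)).map (homOfLE hct₀lt.le) ξ) := by
            show ((X.X (k+1)).map (homOfLE hct₀lt.le) ((X.d k (k+1)).app c y),
              (E.X (k+1)).map (homOfLE hct₀lt.le) ξ)
              = ((X.d k (k+1)).app t₀ ((X.X k).map (homOfLE hct₀lt.le) y),
                 (E.X (k+1)).map (homOfLE hct₀lt.le) ξ)
            rw [nat_app (X.d k (k+1))]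
          rw [h2] at h1
          exact h1
      have hpη : (p.f k).app t₀ η = (Bc.X k).map (homOfLE hct₀lt.le) ((g.f k).app c y) := by
        have h1' : (p.f k).app t₀ η
            = (g.f k).app t₀ ((X.X k).map (homOfLE hct₀lt.le) y) := hM.comp k t₀ _ hη
        exact h1'.trans (nat_app (g.f k) hct₀lt.le y)
      obtain ⟨e, hde, het₀, hpe⟩ :=
        keyLift_fin p hp k c t₀ hct₀lt ξ hdξ η hηd ((g.f k).app c y) hpξ hpη
      refine extend_contra T X E Bc p g M hM (fun G' hG' hle => hMmax.2 hG' hle)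
        k c hcmem y hy e ?_ hpe ?_
      · rw [hde]; exact hξ
      · intro u hcu e' he'
        obtain ⟨hcz, e'', he''⟩ := hentry u hcu e' he'
        have ht₀z : t₀ ≤ zoneF T u := ht₀min _
          (Finset.mem_filter.2 ⟨zoneF_mem T u, hcz, e'', he''⟩)
        have ht₀u : t₀ ≤ u := ht₀z.trans (zoneF_le T u)
        have h1 := hM.res k t₀ u ht₀u (Submodule.mem_map_of_mem hη)
        have h2 : prMap X E k ht₀u ((X.X k).map (homOfLE hct₀) y, η)
            = ((X.X k).map (homOfLE hcu) y, (E.X k).map (homOfLE hcu) e) := by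
          show ((X.X k).map (homOfLE ht₀u) ((X.X k).map (homOfLE hct₀) y),
              (E.X k).map (homOfLE ht₀u) η) = _
          rw [pmap_map, ← het₀, pmap_map]
        rw [h2] at h1
        exact h1
    · -- no entry time
      obtain ⟨e, hde, hpe⟩ := keyLift_inf p hp k c ξ hdξ ((g.f k).app c y) hpξ
      refine extend_contra T X E Bc p g M hM (fun G' hG' hle => hMmax.2 hG' hle)
        k c hcmem y hy e ?_ hpe ?_
      · rw [hde]; exact hξ
      · intro u hcu e' he'
        exfalso
        obtain ⟨hcz, e'', he''⟩ := hentry u hcu e' he'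
        exact hTcne ⟨zoneF T u, Finset.mem_filter.2 ⟨zoneF_mem T u, hcz, e'', he''⟩⟩
  -- construct the lift
  choose lfun hlfun using total
  have ladd : ∀ (k : ℕ) (u : ℝ≥0) (x x' : (X.X k).obj u),
      lfun k u (x + x') = lfun k u x + lfun k u x' := by
    intro k u x x'
    exact uniq k u (x + x') _ _ (hlfun k u (x + x'))
      (Submodule.add_mem _ (hlfun k u x) (hlfun k u x'))
  have hsmul : ∀ (k : ℕ) (u : ℝ≥0) (a : ℚ) (x : (X.X k).obj u),
      lfun k u (a • x) = a • lfun k u x := by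
    intro k u a x
    exact uniq k u (a • x) _ _ (hlfun k u (a • x))
      (Submodule.smul_mem _ a (hlfun k u x))
  have hnat : ∀ (k : ℕ) (u v : ℝ≥0) (huv : u ≤ v) (x : (X.X k).obj u),
      lfun k v ((X.X k).map (homOfLE huv) x) = (E.X k).map (homOfLE huv) (lfun k u x) := by
    intro k u v huv x
    exact uniq k v ((X.X k).map (homOfLE huv) x) _ _
      (hlfun k v _) (hM.res k u v huv (Submodule.mem_map_of_mem (hlfun k u x)))
  have hd : ∀ (k : ℕ) (u : ℝ≥0) (x : (X.X k).obj u),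
      lfun (k+1) u ((X.d k (k+1)).app u x) = (E.d k (k+1)).app u (lfun k u x) := by
    intro k u x
    exact uniq (k+1) u ((X.d k (k+1)).app u x) _ _
      (hlfun (k+1) u _) (hM.dcl k u (Submodule.mem_map_of_mem (hlfun k u x)))
  have hcompat : ∀ (k : ℕ) (u : ℝ≥0) (x : (X.X k).obj u),
      (p.f k).app u (lfun k u x) = (g.f k).app u x := by
    intro k u x
    exact hM.comp k u _ (hlfun k u x)
  have lf : ∀ (k : ℕ) (u : ℝ≥0), (X.X k).obj u ⟶ (E.X k).obj u := fun k u =>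
    ModuleCat.ofHom
      { toFun := lfun k u
        map_add' := ladd k u
        map_smul' := fun a x => by rw [RingHom.id_apply]; exact hsmul k u a x }
  let lnat : ∀ k : ℕ, X.X k ⟶ E.X k := fun k =>
    { app := fun u => ModuleCat.ofHom
        { toFun := lfun k u
          map_add' := ladd k u
          map_smul' := fun a x => by rw [RingHom.id_apply]; exact hsmul k u a x }
      naturality := by
        intro u v f
        apply ModuleCat.hom_ext
        apply LinearMap.ext
        intro x
        exact hnat k u v (leOfHom f) x }
  refine ⟨{ f := lnat, comm' := ?_ }, ?_⟩
  · intro i j hij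
    have hj : i + 1 = j := hij
    subst hj
    apply NatTrans.ext
    funext u
    apply ModuleCat.hom_ext
    apply LinearMap.ext
    intro x
    exact (hd i u x).symm
  apply HomologicalComplex.hom_ext
  intro n
  apply NatTrans.ext
  funext u
  apply ModuleCat.hom_ext
  apply LinearMap.ext
  intro x
  exact hcompat n u x

end MainFinal

end Pers
namespace Pers

open ZeroObject in
/-- Every tame object `X` of `pCh` is cofibrant in the
interval-sphere model structure: the unique map `0 ⟶ X` belongs to `Cof(I)`. -/
theorem cofibrant_of_tame (X : pCh) (hX : TamePCh X) :
    Cof Imem (0 : (0 : pCh) ⟶ X) := by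
  obtain ⟨T, hT⟩ := hX
  intro E' B' f hf
  constructor
  intro tp bt sq
  obtain ⟨lft, hlft⟩ := exists_lift_of_tame T X E' B' f bt hT hf
  exact ⟨⟨⟨lft, (Limits.isZero_zero pCh).eq_of_src _ _, hlft⟩⟩⟩

end Pers
end
end
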